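/- arXiv:1007.2754 — 16 statements merged into one kernel-verified Lean document; each statement's English description precedes it below -/
import Mathlib

section
/- Let h be a relational hidden-variable model. Then h satisfies Strong Determinism if and only if h satisfies both Weak Determinism and Parameter Independence. -/
/-- Strong Determinism is equivalent to the conjunction of Weak Determinism
and Parameter Independence. -/
theorem stmt_1 {n : ℕ} (hn : 1 ≤ n) (M O : Fin n → Type) (Λ : Type)
    (h : (∀ i, M i) → (∀ i, O i) → Λ → Prop) :
    -- Strong Determinism
    (∀ (i : Fin n) (m m' : ∀ j, M j) (o o' : ∀ j, O j) (l : Λ),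
        h m o l → h m' o' l → m i = m' i → o i = o' i)
    ↔
    -- Weak Determinism
    ((∀ (m : ∀ j, M j) (o o' : ∀ j, O j) (l : Λ),
        h m o l → h m o' l → o = o') ∧
     -- Parameter Independence
     (∀ (i : Fin n) (m m' : ∀ j, M j), m i = m' i → ∀ (o : O i) (l : Λ),
        (∃ ob : ∀ j, O j, ob i = o ∧ h m ob l) →
        (∃ ob : ∀ j, O j, h m' ob l) →
        ∃ ob : ∀ j, O j, ob i = o ∧ h m' ob l)) := by
  constructor
  · intro SD
    refine ⟨fun m o o' l hmo hmo' => funext fun i => SD i m m o o' l hmo hmo' rfl, ?_⟩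
    rintro i m m' hmm o l ⟨ob, hob, hmob⟩ ⟨ob', hob'⟩
    exact ⟨ob', by rw [← SD i m m' ob ob' l hmob hob' hmm, hob], hob'⟩
  · rintro ⟨WD, PI⟩ i m m' o o' l hmo hmo' hmm
    obtain ⟨ob, hobi, hob⟩ := PI i m m' hmm (o i) l ⟨o, rfl, hmo⟩ ⟨o', hmo'⟩
    rw [← hobi, WD m' ob o' l hob hmo']
end

section
/- Let h be a relational hidden-variable model. Then h satisfies Locality if and only if h satisfies both Parameter Independence and Outcome Independence. -/
/-- Locality is equivalent to the conjunction of Parameter Independence and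
Outcome Independence. -/
theorem stmt_2 {n : ℕ} (hn : 1 ≤ n) (M O : Fin n → Type) (Λ : Type)
    (h : (∀ i, M i) → (∀ i, O i) → Λ → Prop) :
    -- Locality
    (∀ (m : ∀ j, M j) (o : ∀ j, O j) (l : Λ),
        (∃ ob : ∀ j, O j, h m ob l) →
        (∀ i : Fin n, ∃ (m' : ∀ j, M j) (o' : ∀ j, O j),
            m' i = m i ∧ o' i = o i ∧ h m' o' l) →
        h m o l)
    ↔
    -- Parameter Independence
    ((∀ (i : Fin n) (m m' : ∀ j, M j), m i = m' i → ∀ (o : O i) (l : Λ),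
        (∃ ob : ∀ j, O j, ob i = o ∧ h m ob l) →
        (∃ ob : ∀ j, O j, h m' ob l) →
        ∃ ob : ∀ j, O j, ob i = o ∧ h m' ob l) ∧
     -- Outcome Independence
     (∀ (m : ∀ j, M j) (i : Fin n) (o o' : ∀ j, O j) (l : Λ),
        h m o l → h m o' l → h m (Function.update o' i (o i)) l)) := by
  constructor
  · intro L
    constructor
    · rintro i m m' hmm o l ⟨ob, hobi, hob⟩ ⟨ob', hob'⟩
      refine ⟨Function.update ob' i o, by simp, ?_⟩
      apply L
      · exact ⟨ob', hob'⟩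
      · intro j
        by_cases hj : j = i
        · subst hj
          exact ⟨m, ob, hmm, by simp [hobi], hob⟩
        · exact ⟨m', ob', rfl, by simp [Function.update_of_ne hj], hob'⟩
    · intro m i o o' l ho ho'
      apply L
      · exact ⟨o', ho'⟩
      · intro j
        by_cases hj : j = i
        · subst hj; exact ⟨m, o, rfl, by simp, ho⟩
        · exact ⟨m, o', rfl, by simp [Function.update_of_ne hj], ho'⟩
  · rintro ⟨PI, OI⟩ m o l ⟨ob, hob⟩ hloc
    have key : ∀ i, ∃ obi : ∀ j, O j, obi i = o i ∧ h m obi l := by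
      intro i
      obtain ⟨m', o', hm', ho', hmo'⟩ := hloc i
      exact PI i m' m hm' (o i) l ⟨o', ho', hmo'⟩ ⟨ob, hob⟩
    choose obF hobF hobFh using key
    have step : ∀ k : ℕ, k ≤ n → ∃ ob' : ∀ j, O j, h m ob' l ∧
        ∀ j : Fin n, (j : ℕ) < k → ob' j = o j := by
      intro k
      induction k with
      | zero => exact fun _ => ⟨ob, hob, fun j hj => absurd hj (Nat.not_lt_zero _)⟩
      | succ k ih =>
        intro hk
        obtain ⟨ob', hob', hagree⟩ := ih (Nat.le_of_succ_le hk)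
        set i : Fin n := ⟨k, hk⟩
        refine ⟨Function.update ob' i (obF i i),
          OI m i (obF i) ob' l (hobFh i) hob', ?_⟩
        intro j hj
        by_cases hji : j = i
        · subst hji; simp [hobF]
        · rw [Function.update_of_ne hji]
          exact hagree j (lt_of_le_of_ne (Nat.lt_succ_iff.mp hj)
            (fun hh => hji (Fin.ext hh)))
    obtain ⟨ob', hob', hagree⟩ := step n le_rfl
    have : ob' = o := funext fun j => hagree j j.isLt
    rwa [this] at hob'
end

section
/- Let h be a relational hidden-variable model. If h satisfies Strong Determinism, then h satisfies Locality. -/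
/-- Strong Determinism implies Locality. -/
theorem stmt_3 {n : ℕ} (hn : 1 ≤ n) (M O : Fin n → Type) (Λ : Type)
    (h : (∀ i, M i) → (∀ i, O i) → Λ → Prop)
    -- Strong Determinism
    (hSD : ∀ (i : Fin n) (m m' : ∀ j, M j) (o o' : ∀ j, O j) (l : Λ),
        h m o l → h m' o' l → m i = m' i → o i = o' i) :
    -- Locality
    ∀ (m : ∀ j, M j) (o : ∀ j, O j) (l : Λ),
      (∃ ob : ∀ j, O j, h m ob l) →
      (∀ i : Fin n, ∃ (m' : ∀ j, M j) (o' : ∀ j, O j),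
          m' i = m i ∧ o' i = o i ∧ h m' o' l) →
      h m o l := by
  intro m o l ⟨ob, hob⟩ hloc
  have : ob = o := by
    funext i
    obtain ⟨m', o', hm, ho, hh⟩ := hloc i
    rw [hSD i m m' ob o' l hob hh hm.symm, ho]
  rwa [← this]
end

section
/- Let h be a relational hidden-variable model and let e be the empirical model induced by h, i.e. e(m̄,ō) holds iff there exists λ with h(m̄,ō,λ). If h satisfies λ-Independence and Parameter Independence, then e satisfies No-Signalling. -/
/-- If a hidden-variable model satisfies λ-Independence and Parameter
Independence, then the induced empirical model satisfies No-Signalling. -/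
theorem stmt_4 {n : ℕ} (hn : 1 ≤ n) (M O : Fin n → Type) (Λ : Type)
    (h : (∀ i, M i) → (∀ i, O i) → Λ → Prop)
    (e : (∀ i, M i) → (∀ i, O i) → Prop)
    -- e is the empirical model induced by h
    (hind : ∀ m o, e m o ↔ ∃ l : Λ, h m o l)
    -- λ-Independence
    (hLI : ∀ (m m' : ∀ j, M j) (l : Λ),
        (∃ (ob : ∀ j, O j) (l' : Λ), h m' ob l') →
        (∃ ob : ∀ j, O j, h m ob l) →
        ∃ ob : ∀ j, O j, h m' ob l)
    -- Parameter Independence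
    (hPI : ∀ (i : Fin n) (m m' : ∀ j, M j), m i = m' i → ∀ (o : O i) (l : Λ),
        (∃ ob : ∀ j, O j, ob i = o ∧ h m ob l) →
        (∃ ob : ∀ j, O j, h m' ob l) →
        ∃ ob : ∀ j, O j, ob i = o ∧ h m' ob l) :
    -- No-Signalling for e
    ∀ (i : Fin n) (m m' : ∀ j, M j), m i = m' i → ∀ o : O i,
      (∃ ob : ∀ j, O j, ob i = o ∧ e m ob) →
      (∃ ob : ∀ j, O j, e m' ob) →
      ∃ ob : ∀ j, O j, ob i = o ∧ e m' ob := by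
  intro i m m' hmm o ⟨ob, hob, hem⟩ ⟨ob', hem'⟩
  obtain ⟨l, hl⟩ := (hind m ob).1 hem
  obtain ⟨l', hl'⟩ := (hind m' ob').1 hem'
  obtain ⟨ob2, hob2⟩ := hLI m m' l ⟨ob', l', hl'⟩ ⟨ob, hl⟩
  obtain ⟨ob3, hob3, hh3⟩ := hPI i m m' hmm o l ⟨ob, hob, hl⟩ ⟨ob2, hob2⟩
  exact ⟨ob3, hob3, (hind m' ob3).2 ⟨l, hh3⟩⟩
end

section
/- An empirical model e satisfies No-Signalling if and only if there exist a set Λ and a relational hidden-variable model h ⊆ M × O × Λ satisfying λ-Independence and Parameter Independence which realizes e. -/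
/-- An empirical model satisfies No-Signalling iff it is realized by a
hidden-variable model satisfying λ-Independence and Parameter Independence. -/
theorem stmt_5 {n : ℕ} (hn : 1 ≤ n) (M O : Fin n → Type)
    (e : (∀ i, M i) → (∀ i, O i) → Prop) :
    -- No-Signalling for e
    (∀ (i : Fin n) (m m' : ∀ j, M j), m i = m' i → ∀ o : O i,
      (∃ ob : ∀ j, O j, ob i = o ∧ e m ob) →
      (∃ ob : ∀ j, O j, e m' ob) →
      ∃ ob : ∀ j, O j, ob i = o ∧ e m' ob)
    ↔
    ∃ (Λ : Type) (h : (∀ i, M i) → (∀ i, O i) → Λ → Prop),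
      -- λ-Independence
      (∀ (m m' : ∀ j, M j) (l : Λ),
          (∃ (ob : ∀ j, O j) (l' : Λ), h m' ob l') →
          (∃ ob : ∀ j, O j, h m ob l) →
          ∃ ob : ∀ j, O j, h m' ob l) ∧
      -- Parameter Independence
      (∀ (i : Fin n) (m m' : ∀ j, M j), m i = m' i → ∀ (o : O i) (l : Λ),
          (∃ ob : ∀ j, O j, ob i = o ∧ h m ob l) →
          (∃ ob : ∀ j, O j, h m' ob l) →
          ∃ ob : ∀ j, O j, ob i = o ∧ h m' ob l) ∧
      -- h realizes e
      (∀ (m : ∀ j, M j) (o : ∀ j, O j), e m o ↔ ∃ l : Λ, h m o l) := by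
  constructor
  · intro NS
    refine ⟨Unit, fun m o _ => e m o, ?_, ?_, ?_⟩
    · rintro m m' l ⟨ob, _, hob⟩ _
      exact ⟨ob, hob⟩
    · intro i m m' hmm o l h1 h2
      exact NS i m m' hmm o h1 h2
    · intro m o
      exact ⟨fun he => ⟨(), he⟩, fun ⟨_, he⟩ => he⟩
  · rintro ⟨Λ, h, lI, PI, real⟩ i m m' hmm o ⟨ob, hobi, he⟩ ⟨ob', he'⟩
    obtain ⟨l, hl⟩ := (real m ob).1 he
    obtain ⟨l', hl'⟩ := (real m' ob').1 he'
    obtain ⟨ob2, hob2⟩ := lI m m' l ⟨ob', l', hl'⟩ ⟨ob, hl⟩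
    obtain ⟨ob3, hob3i, hob3⟩ := PI i m m' hmm o l ⟨ob, hobi, hl⟩ ⟨ob2, hob2⟩
    exact ⟨ob3, hob3i, (real m' ob3).2 ⟨l, hob3⟩⟩
end

section
/- Every relational empirical model e is realized by some relational hidden-variable model satisfying both Weak Determinism and λ-Independence. -/
/-- Every relational empirical model is realized by a hidden-variable model
satisfying Weak Determinism and λ-Independence. -/
theorem stmt_7 {n : ℕ} (hn : 1 ≤ n) (M O : Fin n → Type)
    (e : (∀ i, M i) → (∀ i, O i) → Prop) :
    ∃ (Λ : Type) (h : (∀ i, M i) → (∀ i, O i) → Λ → Prop),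
      -- Weak Determinism
      (∀ (m : ∀ j, M j) (o o' : ∀ j, O j) (l : Λ),
          h m o l → h m o' l → o = o') ∧
      -- λ-Independence
      (∀ (m m' : ∀ j, M j) (l : Λ),
          (∃ (ob : ∀ j, O j) (l' : Λ), h m' ob l') →
          (∃ ob : ∀ j, O j, h m ob l) →
          ∃ ob : ∀ j, O j, h m' ob l) ∧
      -- h realizes e
      (∀ (m : ∀ j, M j) (o : ∀ j, O j), e m o ↔ ∃ l : Λ, h m o l) := by
  classical
  refine ⟨{g : (∀ i, M i) → ∀ j, O j // ∀ m, (∃ o, e m o) → e m (g m)},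
    fun m o l => l.1 m = o ∧ ∃ o', e m o', ?_, ?_, ?_⟩
  · rintro m o o' l ⟨h1, -⟩ ⟨h2, -⟩
    rw [← h1, ← h2]
  · rintro m m' l ⟨ob, l', hb, he⟩ _
    exact ⟨l.1 m', rfl, he⟩
  · intro m o
    constructor
    · intro hmo
      refine ⟨⟨fun m'' => if m'' = m then o
        else if h : ∃ o', e m'' o' then h.choose else o, ?_⟩, ?_, ⟨o, hmo⟩⟩
      · intro m'' h''
        by_cases hc : m'' = m
        · simp only [hc, if_pos rfl]; exact hc ▸ hmo
        · simp only [if_neg hc, dif_pos h'']; exact h''.choose_spec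
      · simp
    · rintro ⟨l, hl, o', he'⟩
      have := l.2 m ⟨o', he'⟩
      rwa [hl] at this
end

section
/- Let h be a relational hidden-variable model satisfying λ-Independence and Locality. Then there exists a relational hidden-variable model h' (over a possibly different set Λ' of hidden-variable values) which is equivalent to h (i.e. realizes the same empirical model) and satisfies λ-Independence and Strong Determinism. -/
/-- Every hidden-variable model satisfying λ-Independence and Locality is
equivalent to one satisfying λ-Independence and Strong Determinism. -/
theorem stmt_8 {n : ℕ} (hn : 1 ≤ n) (M O : Fin n → Type) (Λ : Type)
    (h : (∀ i, M i) → (∀ i, O i) → Λ → Prop)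
    -- λ-Independence for h
    (hLI : ∀ (m m' : ∀ j, M j) (l : Λ),
        (∃ (ob : ∀ j, O j) (l' : Λ), h m' ob l') →
        (∃ ob : ∀ j, O j, h m ob l) →
        ∃ ob : ∀ j, O j, h m' ob l)
    -- Locality for h
    (hL : ∀ (m : ∀ j, M j) (o : ∀ j, O j) (l : Λ),
        (∃ ob : ∀ j, O j, h m ob l) →
        (∀ i : Fin n, ∃ (m' : ∀ j, M j) (o' : ∀ j, O j),
            m' i = m i ∧ o' i = o i ∧ h m' o' l) →
        h m o l) :
    ∃ (Λ' : Type) (h' : (∀ i, M i) → (∀ i, O i) → Λ' → Prop),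
      -- h' is equivalent to h : they realize the same empirical model
      (∀ (m : ∀ j, M j) (o : ∀ j, O j), (∃ l : Λ, h m o l) ↔ ∃ l' : Λ', h' m o l') ∧
      -- λ-Independence for h'
      (∀ (m m' : ∀ j, M j) (l : Λ'),
          (∃ (ob : ∀ j, O j) (l' : Λ'), h' m' ob l') →
          (∃ ob : ∀ j, O j, h' m ob l) →
          ∃ ob : ∀ j, O j, h' m' ob l) ∧
      -- Strong Determinism for h'
      (∀ (i : Fin n) (m m' : ∀ j, M j) (o o' : ∀ j, O j) (l : Λ'),
          h' m o l → h' m' o' l → m i = m' i → o i = o' i) := by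
  classical
  -- compatibility of a response function f with a hidden value l
  let compat : Λ → (∀ i, M i → O i) → Prop := fun l f =>
    ∀ m' : ∀ j, M j, (∃ ob, h m' ob l) → h m' (fun i => f i (m' i)) l
  refine ⟨Λ × (∀ i, M i → O i),
    fun m o p => (o = fun i => p.2 i (m i)) ∧ h m o p.1 ∧ compat p.1 p.2, ?_, ?_, ?_⟩
  · intro m o
    constructor
    · rintro ⟨l, hml⟩
      -- build a response function
      refine ⟨⟨l, fun i μ =>
        if hμ : μ = m i then o i
        else if hex : ∃ o' : O i, ∃ (m'' : ∀ j, M j) (o'' : ∀ j, O j),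
            m'' i = μ ∧ o'' i = o' ∧ h m'' o'' l then hex.choose else o i⟩, ?_, hml, ?_⟩
      · funext i; simp
      · intro m' hm'
        apply hL m' _ l hm'
        intro i
        by_cases hμ : m' i = m i
        · refine ⟨m, o, hμ.symm, ?_, hml⟩
          simp [hμ]
        · have hex : ∃ o' : O i, ∃ (m'' : ∀ j, M j) (o'' : ∀ j, O j),
              m'' i = m' i ∧ o'' i = o' ∧ h m'' o'' l := by
            obtain ⟨ob, hob⟩ := hm'
            exact ⟨ob i, m', ob, rfl, rfl, hob⟩
          obtain ⟨m'', o'', h1, h2, h3⟩ := hex.choose_spec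
          refine ⟨m'', o'', h1, ?_, h3⟩
          simp only [hμ, dite_false, hex, dite_true]
          exact h2
    · rintro ⟨⟨l, f⟩, _, hml, _⟩
      exact ⟨l, hml⟩
  · rintro m m' ⟨l, f⟩ ⟨ob'', ⟨l₀, f₀⟩, _, hob'', _⟩ ⟨ob, _, hob, hcompat⟩
    have : ∃ ob, h m' ob l := hLI m m' l ⟨ob'', l₀, hob''⟩ ⟨ob, hob⟩
    exact ⟨fun i => f i (m' i), rfl, hcompat m' this, hcompat⟩
  · rintro i m m' o o' ⟨l, f⟩ ⟨ho, -, -⟩ ⟨ho', -, -⟩ hm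
    rw [ho, ho']
    exact congrArg ((l, f).2 i) hm
end

section
/- Consider the bipartite system type with M_1 = {X}, M_2 = {Y}, O_1 = O_2 = {a,b}, and the empirical model e = {((X,Y),(a,b)), ((X,Y),(b,a))} (so e holds exactly on outcomes (a,b) and (b,a) and fails on (a,a) and (b,b)). Then e is not realized by any relational hidden-variable model satisfying Single-Valuedness and Outcome Independence. -/
/-- EPR: the model with M₁ = {X}, M₂ = {Y} (singletons), O₁ = O₂ = {a,b}
(encoded as Bool, a = false, b = true), holding exactly on the outcomes
(a,b) and (b,a), is not realized by any hidden-variable model satisfying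
Single-Valuedness and Outcome Independence. -/
theorem stmt_9 (e : (Fin 2 → Unit) → (Fin 2 → Bool) → Prop)
    -- e holds exactly on (a,b) and (b,a), i.e. where the two outcomes differ
    (he : ∀ m o, e m o ↔ o 0 ≠ o 1) :
    ¬ ∃ (Λ : Type) (h : (Fin 2 → Unit) → (Fin 2 → Bool) → Λ → Prop),
      -- Single-Valuedness: Λ is a singleton
      (∃ l₀ : Λ, ∀ l : Λ, l = l₀) ∧
      -- Outcome Independence
      (∀ (m : Fin 2 → Unit) (i : Fin 2) (o o' : Fin 2 → Bool) (l : Λ),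
          h m o l → h m o' l → h m (Function.update o' i (o i)) l) ∧
      -- h realizes e
      (∀ m o, e m o ↔ ∃ l : Λ, h m o l) := by
  rintro ⟨Λ, h, ⟨l₀, hsv⟩, hoi, hreal⟩
  set m : Fin 2 → Unit := fun _ => ()
  set o₁ : Fin 2 → Bool := fun i => decide (i = 1)
  set o₂ : Fin 2 → Bool := fun i => decide (i = 0)
  have h1 : e m o₁ := (he m o₁).2 (by simp [o₁])
  have h2 : e m o₂ := (he m o₂).2 (by simp [o₂])
  obtain ⟨l₁, hl₁⟩ := (hreal m o₁).1 h1
  obtain ⟨l₂, hl₂⟩ := (hreal m o₂).1 h2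
  rw [hsv l₁] at hl₁
  rw [hsv l₂] at hl₂
  have h3 := hoi m 0 o₁ o₂ l₀ hl₁ hl₂
  have h4 : e m (Function.update o₂ 0 (o₁ 0)) := (hreal m _).2 ⟨l₀, h3⟩
  have := (he m _).1 h4
  simp [o₁, o₂, Function.update] at this
end

section
/- No GHZ model is realized by any relational hidden-variable model satisfying λ-Independence and Locality. -/
/-- GHZ: no GHZ model is realized by any hidden-variable model satisfying
λ-Independence and Locality.  Measurements 1,2 are encoded as false,true;
outcomes R,G as false,true.  The outcome set {RRR,RGG,GRG,GGR} consists of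
exactly the triples of even G-parity (xor = false), and
{RRG,RGR,GRR,GGG} those of odd G-parity (xor = true). -/
theorem stmt_10 (e : (Fin 3 → Bool) → (Fin 3 → Bool) → Prop)
    -- e(1,2,2) = e(2,1,2) = e(2,2,1) = {RRR, RGG, GRG, GGR}
    (hP : ∀ m : Fin 3 → Bool,
        (m = ![false, true, true] ∨ m = ![true, false, true] ∨
         m = ![true, true, false]) →
        ∀ o, e m o ↔ xor (o 0) (xor (o 1) (o 2)) = false)
    -- e(1,1,1) = {RRG, RGR, GRR, GGG}
    (h111 : ∀ o, e ![false, false, false] o ↔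
        xor (o 0) (xor (o 1) (o 2)) = true) :
    ¬ ∃ (Λ : Type) (h : (Fin 3 → Bool) → (Fin 3 → Bool) → Λ → Prop),
      -- λ-Independence
      (∀ (m m' : Fin 3 → Bool) (l : Λ),
          (∃ (ob : Fin 3 → Bool) (l' : Λ), h m' ob l') →
          (∃ ob : Fin 3 → Bool, h m ob l) →
          ∃ ob : Fin 3 → Bool, h m' ob l) ∧
      -- Locality
      (∀ (m o : Fin 3 → Bool) (l : Λ),
          (∃ ob : Fin 3 → Bool, h m ob l) →
          (∀ i : Fin 3, ∃ (m' o' : Fin 3 → Bool),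
              m' i = m i ∧ o' i = o i ∧ h m' o' l) →
          h m o l) ∧
      -- h realizes e
      (∀ m o, e m o ↔ ∃ l : Λ, h m o l) := by
  rintro ⟨Λ, h, hI, hL, hre⟩
  -- a hidden variable l supporting the (1,1,1) context
  obtain ⟨l, hD⟩ := (hre ![false,false,false] ![false,false,true]).1
    ((h111 ![false,false,true]).2 (by decide))
  -- the other contexts are nonempty
  have hEA : e ![false,true,true] ![false,false,false] :=
    (hP _ (Or.inl rfl) _).2 (by decide)
  have hEB : e ![true,false,true] ![false,false,false] :=
    (hP _ (Or.inr (Or.inl rfl)) _).2 (by decide)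
  have hEC : e ![true,true,false] ![false,false,false] :=
    (hP _ (Or.inr (Or.inr rfl)) _).2 (by decide)
  obtain ⟨lA, hlA⟩ := (hre _ _).1 hEA
  obtain ⟨lB, hlB⟩ := (hre _ _).1 hEB
  obtain ⟨lC, hlC⟩ := (hre _ _).1 hEC
  -- λ-independence: l supports all four contexts
  obtain ⟨oA, hoA⟩ := hI ![false,false,false] ![false,true,true] l ⟨_, _, hlA⟩ ⟨_, hD⟩
  obtain ⟨oB, hoB⟩ := hI ![false,false,false] ![true,false,true] l ⟨_, _, hlB⟩ ⟨_, hD⟩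
  obtain ⟨oC, hoC⟩ := hI ![false,false,false] ![true,true,false] l ⟨_, _, hlC⟩ ⟨_, hD⟩
  -- mixed outcomes via Locality
  have hB' : h ![true,false,true] ![oB 0, oB 1, oA 2] l := by
    apply hL _ _ _ ⟨_, hoB⟩
    intro i
    fin_cases i
    · exact ⟨![true,false,true], oB, rfl, by simp, hoB⟩
    · exact ⟨![true,false,true], oB, rfl, by simp, hoB⟩
    · exact ⟨![false,true,true], oA, rfl, by simp, hoA⟩
  have hC' : h ![true,true,false] ![oB 0, oA 1, oC 2] l := by
    apply hL _ _ _ ⟨_, hoC⟩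
    intro i
    fin_cases i
    · exact ⟨![true,false,true], oB, rfl, by simp, hoB⟩
    · exact ⟨![false,true,true], oA, rfl, by simp, hoA⟩
    · exact ⟨![true,true,false], oC, rfl, by simp, hoC⟩
  have hD' : h ![false,false,false] ![oA 0, oB 1, oC 2] l := by
    apply hL _ _ _ ⟨_, hD⟩
    intro i
    fin_cases i
    · exact ⟨![false,true,true], oA, rfl, by simp, hoA⟩
    · exact ⟨![true,false,true], oB, rfl, by simp, hoB⟩
    · exact ⟨![true,true,false], oC, rfl, by simp, hoC⟩
  -- derive the four parity equations
  have pA : xor (oA 0) (xor (oA 1) (oA 2)) = false :=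
    (hP _ (Or.inl rfl) _).1 ((hre _ _).2 ⟨_, hoA⟩)
  have pB : xor (oB 0) (xor (oB 1) (oA 2)) = false := by
    have := (hP _ (Or.inr (Or.inl rfl)) _).1 ((hre _ _).2 ⟨_, hB'⟩)
    simpa using this
  have pC : xor (oB 0) (xor (oA 1) (oC 2)) = false := by
    have := (hP _ (Or.inr (Or.inr rfl)) _).1 ((hre _ _).2 ⟨_, hC'⟩)
    simpa using this
  have pD : xor (oA 0) (xor (oB 1) (oC 2)) = true := by
    have := (h111 _).1 ((hre _ _).2 ⟨_, hD'⟩)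
    simpa using this
  have key : ∀ a b c d e f : Bool, xor a (xor b c) = false → xor d (xor e c) = false →
      xor d (xor b f) = false → xor a (xor e f) = true → False := by decide
  exact key _ _ _ _ _ _ pA pB pC pD
end

section
/- No Hardy model is realized by any relational hidden-variable model satisfying λ-Independence and Locality. -/
/-- Hardy: no Hardy model is realized by any hidden-variable model satisfying
λ-Independence and Locality.  Measurements X₁,Y₁ are encoded as false and
X₂,Y₂ as true; outcomes R,G as false,true. -/
theorem stmt_11 (e : (Fin 2 → Bool) → (Fin 2 → Bool) → Prop)
    -- e((X₁,Y₁),(R,R)) holds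
    (h11 : e ![false, false] ![false, false])
    -- e((X₁,Y₂),(R,R)) fails
    (h12 : ¬ e ![false, true] ![false, false])
    -- e((X₂,Y₁),(R,R)) fails
    (h21 : ¬ e ![true, false] ![false, false])
    -- e((X₂,Y₂),(G,G)) fails
    (h22 : ¬ e ![true, true] ![true, true])
    -- e is total
    (htot : ∀ m : Fin 2 → Bool, ∃ o : Fin 2 → Bool, e m o) :
    ¬ ∃ (Λ : Type) (h : (Fin 2 → Bool) → (Fin 2 → Bool) → Λ → Prop),
      -- λ-Independence
      (∀ (m m' : Fin 2 → Bool) (l : Λ),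
          (∃ (ob : Fin 2 → Bool) (l' : Λ), h m' ob l') →
          (∃ ob : Fin 2 → Bool, h m ob l) →
          ∃ ob : Fin 2 → Bool, h m' ob l) ∧
      -- Locality
      (∀ (m o : Fin 2 → Bool) (l : Λ),
          (∃ ob : Fin 2 → Bool, h m ob l) →
          (∀ i : Fin 2, ∃ (m' o' : Fin 2 → Bool),
              m' i = m i ∧ o' i = o i ∧ h m' o' l) →
          h m o l) ∧
      -- h realizes e
      (∀ m o, e m o ↔ ∃ l : Λ, h m o l) := by
  rintro ⟨Λ, h, hLI, hLoc, hreal⟩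
  -- obtain l realizing (X₁,Y₁)↦(R,R)
  obtain ⟨l, hl⟩ := (hreal _ _).mp h11
  -- every context is defined at l
  have hdef : ∀ m : Fin 2 → Bool, ∃ ob : Fin 2 → Bool, h m ob l := by
    intro m
    obtain ⟨o, ho⟩ := htot m
    obtain ⟨l', hl'⟩ := (hreal _ _).mp ho
    exact hLI ![false, false] m l ⟨o, l', hl'⟩ ⟨![false, false], hl⟩
  -- step 1 : h ![false,true] ![false,true] l
  obtain ⟨o12, ho12⟩ := hdef ![false, true]
  have step1 : h ![false, true] ![false, o12 1] l := by
    apply hLoc _ _ _ ⟨o12, ho12⟩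
    intro i
    fin_cases i
    · exact ⟨![false, false], ![false, false], rfl, rfl, hl⟩
    · exact ⟨![false, true], o12, rfl, rfl, ho12⟩
  have ho12t : o12 1 = true := by
    cases hc : o12 1 with
    | false =>
        rw [hc] at step1
        exact absurd ((hreal _ _).mpr ⟨l, step1⟩) (by simpa using h12)
    | true => rfl
  rw [ho12t] at step1
  -- step 2 : h ![true,false] ![true,false] l
  obtain ⟨o21, ho21⟩ := hdef ![true, false]
  have step2 : h ![true, false] ![o21 0, false] l := by
    apply hLoc _ _ _ ⟨o21, ho21⟩
    intro i
    fin_cases i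
    · exact ⟨![true, false], o21, rfl, rfl, ho21⟩
    · exact ⟨![false, false], ![false, false], rfl, rfl, hl⟩
  have ho21t : o21 0 = true := by
    cases hc : o21 0 with
    | false =>
        rw [hc] at step2
        exact absurd ((hreal _ _).mpr ⟨l, step2⟩) (by simpa using h21)
    | true => rfl
  rw [ho21t] at step2
  -- step 3 : h ![true,true] ![true,true] l, contradiction
  have step3 : h ![true, true] ![true, true] l := by
    apply hLoc _ _ _ (hdef ![true, true])
    intro i
    fin_cases i
    · exact ⟨![true, false], ![true, false], rfl, rfl, step2⟩
    · exact ⟨![false, true], ![false, true], rfl, rfl, step1⟩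
  exact h22 ((hreal _ _).mpr ⟨l, step3⟩)
end

section
/- Let e be any empirical model of the Kochen-Specker type (arity 4, M_i = {m_1,…,m_18}, O_i = {0,1} for i = 1,…,4) such that: (1) there is a function f : P → Q with, for all m̄ ∈ P and all ō ∈ O, e(m̄,ō) ↔ f(m̄) = ō; and (2) e is equivariant, i.e. for every permutation π of {1,2,3,4} and all m̄,ō: e(m̄,ō) ↔ e(π·m̄, π·ō). Then e is not realized by any relational hidden-variable model satisfying λ-Independence and Parameter Independence. -/
private lemma onehot_sum4 (o : Fin 4 → Bool)
    (hj : ∃ j : Fin 4, ∀ i : Fin 4, o i = true ↔ i = j) :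
    (o 0).toNat + (o 1).toNat + (o 2).toNat + (o 3).toNat = 1 := by
  obtain ⟨j, hji⟩ := hj
  have ho : ∀ i, o i = decide (i = j) := by
    intro i
    by_cases hc : i = j
    · simp [hc, (hji j).mpr rfl]
    · simp [hc, Bool.eq_false_iff.mpr (fun ht => hc ((hji i).mp ht))]
  rw [ho 0, ho 1, ho 2, ho 3]
  fin_cases j <;> decide

/-- Kochen-Specker: no empirical model of the Kochen-Specker type (arity 4,
18 measurements m₁,…,m₁₈ encoded as Fin 18, outcomes {0,1} encoded as Bool
with 1 = true) which is functional on the columns P of the Cabello table,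
with values in the one-hot outcome set Q, and equivariant, is realized by any
hidden-variable model satisfying λ-Independence and Parameter Independence. -/
theorem stmt_12 (e : (Fin 4 → Fin 18) → (Fin 4 → Bool) → Prop)
    (P : Set (Fin 4 → Fin 18))
    -- the nine columns of the Cabello table (mₖ encoded as k-1 : Fin 18)
    (hPdef : P = {![0, 1, 2, 3], ![0, 4, 5, 6], ![7, 8, 2, 9],
                  ![7, 10, 6, 11], ![1, 4, 12, 13], ![8, 10, 13, 14],
                  ![15, 16, 3, 9], ![15, 17, 5, 11], ![16, 17, 12, 14]})
    (Q : Set (Fin 4 → Bool))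
    -- Q = {(1,0,0,0),(0,1,0,0),(0,0,1,0),(0,0,0,1)}
    (hQdef : Q = {o | ∃ j : Fin 4, ∀ i : Fin 4, o i = true ↔ i = j})
    -- (1) on P, e is given by a function f : P → Q
    (hfun : ∃ f : (Fin 4 → Fin 18) → (Fin 4 → Bool),
        (∀ m ∈ P, f m ∈ Q) ∧ (∀ m ∈ P, ∀ o, e m o ↔ f m = o))
    -- (2) e is equivariant
    (hequi : ∀ (π : Equiv.Perm (Fin 4)) (m : Fin 4 → Fin 18) (o : Fin 4 → Bool),
        e m o ↔ e (fun j => m (π.symm j)) (fun j => o (π.symm j))) :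
    ¬ ∃ (Λ : Type) (h : (Fin 4 → Fin 18) → (Fin 4 → Bool) → Λ → Prop),
      -- λ-Independence
      (∀ (m m' : Fin 4 → Fin 18) (l : Λ),
          (∃ (ob : Fin 4 → Bool) (l' : Λ), h m' ob l') →
          (∃ ob : Fin 4 → Bool, h m ob l) →
          ∃ ob : Fin 4 → Bool, h m' ob l) ∧
      -- Parameter Independence
      (∀ (i : Fin 4) (m m' : Fin 4 → Fin 18), m i = m' i → ∀ (o : Bool) (l : Λ),
          (∃ ob : Fin 4 → Bool, ob i = o ∧ h m ob l) →
          (∃ ob : Fin 4 → Bool, h m' ob l) →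
          ∃ ob : Fin 4 → Bool, ob i = o ∧ h m' ob l) ∧
      -- h realizes e
      (∀ m o, e m o ↔ ∃ l : Λ, h m o l) := by
  rintro ⟨Λ, h, hLI, hPI, hreal⟩
  obtain ⟨f, hfQ, hfe⟩ := hfun
  have hc1P : (![0, 1, 2, 3] : Fin 4 → Fin 18) ∈ P := by rw [hPdef]; simp
  have hE : ∀ c ∈ P, ∃ l, h c (f c) l :=
    fun c hc => (hreal c (f c)).mp ((hfe c hc (f c)).mpr rfl)
  obtain ⟨l0, hl0⟩ := hE _ hc1P
  -- every globally supported measurement context is supported at l0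
  have hsup : ∀ m : Fin 4 → Fin 18, (∃ ob l, h m ob l) → ∃ ob, h m ob l0 :=
    fun m hm => hLI ![0, 1, 2, 3] m l0 hm ⟨f ![0, 1, 2, 3], hl0⟩
  -- at l0, every column of P is supported with outcome f c
  have hcol : ∀ c ∈ P, h c (f c) l0 := by
    intro c hc
    obtain ⟨ob, hob⟩ := hsup c ⟨f c, hE c hc⟩
    have : f c = ob := (hfe c hc ob).mp ((hreal c ob).mpr ⟨l0, hob⟩)
    rwa [this]
  -- key noncontextuality lemma
  have key : ∀ c ∈ P, ∀ c' ∈ P, ∀ i i' : Fin 4, c i = c' i' → f c i = f c' i' := by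
    intro c hc c' hc' i i' hx
    set π := Equiv.swap i i' with hπ
    have hsymm : π.symm = π := Equiv.symm_swap i i'
    have he'' : e (fun j => c' (π j)) (fun j => f c' (π j)) := by
      have := (hequi π c' (f c')).mp ((hfe c' hc' (f c')).mpr rfl)
      rwa [hsymm] at this
    obtain ⟨ob'', hob''⟩ := hsup _ ⟨_, (hreal _ _).mp he''⟩
    -- uniqueness of outcome for the permuted column at l0
    have hu : ∀ ob, h (fun j => c' (π j)) ob l0 → ∀ j, ob j = f c' (π j) := by
      intro ob hob
      have he2 : e (fun j => c' (π j)) ob := (hreal _ _).mpr ⟨l0, hob⟩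
      have he3 : e c' (fun j => ob (π j)) := by
        have := (hequi π (fun j => c' (π j)) ob).mp he2
        rw [hsymm] at this
        simpa [hπ, Equiv.swap_apply_self] using this
      have hfeq : f c' = fun j => ob (π j) := (hfe c' hc' _).mp he3
      intro j
      have := congrFun hfeq (π j)
      simpa [hπ, Equiv.swap_apply_self] using this.symm
    have hci : c i = (fun j => c' (π j)) i := by
      simpa [hπ, Equiv.swap_apply_left] using hx
    obtain ⟨ob, hobi, hob⟩ := hPI i c (fun j => c' (π j)) hci (f c i) l0
      ⟨f c, rfl, hcol c hc⟩ ⟨ob'', hob''⟩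
    have h2 := hu ob hob i
    rw [hobi] at h2
    rw [h2, hπ, Equiv.swap_apply_left]
  have hm1 : (![0, 1, 2, 3] : Fin 4 → Fin 18) ∈ P := by rw [hPdef]; simp
  have hm2 : (![0, 4, 5, 6] : Fin 4 → Fin 18) ∈ P := by rw [hPdef]; simp
  have hm3 : (![7, 8, 2, 9] : Fin 4 → Fin 18) ∈ P := by rw [hPdef]; simp
  have hm4 : (![7, 10, 6, 11] : Fin 4 → Fin 18) ∈ P := by rw [hPdef]; simp
  have hm5 : (![1, 4, 12, 13] : Fin 4 → Fin 18) ∈ P := by rw [hPdef]; simp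
  have hm6 : (![8, 10, 13, 14] : Fin 4 → Fin 18) ∈ P := by rw [hPdef]; simp
  have hm7 : (![15, 16, 3, 9] : Fin 4 → Fin 18) ∈ P := by rw [hPdef]; simp
  have hm8 : (![15, 17, 5, 11] : Fin 4 → Fin 18) ∈ P := by rw [hPdef]; simp
  have hm9 : (![16, 17, 12, 14] : Fin 4 → Fin 18) ∈ P := by rw [hPdef]; simp
  have q1 := onehot_sum4 _ (by have := hfQ _ hm1; rwa [hQdef, Set.mem_setOf_eq] at this)
  have q2 := onehot_sum4 _ (by have := hfQ _ hm2; rwa [hQdef, Set.mem_setOf_eq] at this)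
  have q3 := onehot_sum4 _ (by have := hfQ _ hm3; rwa [hQdef, Set.mem_setOf_eq] at this)
  have q4 := onehot_sum4 _ (by have := hfQ _ hm4; rwa [hQdef, Set.mem_setOf_eq] at this)
  have q5 := onehot_sum4 _ (by have := hfQ _ hm5; rwa [hQdef, Set.mem_setOf_eq] at this)
  have q6 := onehot_sum4 _ (by have := hfQ _ hm6; rwa [hQdef, Set.mem_setOf_eq] at this)
  have q7 := onehot_sum4 _ (by have := hfQ _ hm7; rwa [hQdef, Set.mem_setOf_eq] at this)
  have q8 := onehot_sum4 _ (by have := hfQ _ hm8; rwa [hQdef, Set.mem_setOf_eq] at this)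
  have q9 := onehot_sum4 _ (by have := hfQ _ hm9; rwa [hQdef, Set.mem_setOf_eq] at this)
  have eq0 := congrArg Bool.toNat (key _ hm1 _ hm2 0 0 rfl)
  have eq1 := congrArg Bool.toNat (key _ hm1 _ hm5 1 0 rfl)
  have eq2 := congrArg Bool.toNat (key _ hm1 _ hm3 2 2 rfl)
  have eq3 := congrArg Bool.toNat (key _ hm1 _ hm7 3 2 rfl)
  have eq4 := congrArg Bool.toNat (key _ hm2 _ hm5 1 1 rfl)
  have eq5 := congrArg Bool.toNat (key _ hm2 _ hm8 2 2 rfl)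
  have eq6 := congrArg Bool.toNat (key _ hm2 _ hm4 3 2 rfl)
  have eq7 := congrArg Bool.toNat (key _ hm3 _ hm4 0 0 rfl)
  have eq8 := congrArg Bool.toNat (key _ hm3 _ hm6 1 0 rfl)
  have eq9 := congrArg Bool.toNat (key _ hm3 _ hm7 3 3 rfl)
  have eq10 := congrArg Bool.toNat (key _ hm4 _ hm6 1 1 rfl)
  have eq11 := congrArg Bool.toNat (key _ hm4 _ hm8 3 3 rfl)
  have eq12 := congrArg Bool.toNat (key _ hm5 _ hm9 2 2 rfl)
  have eq13 := congrArg Bool.toNat (key _ hm5 _ hm6 3 2 rfl)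
  have eq14 := congrArg Bool.toNat (key _ hm6 _ hm9 3 3 rfl)
  have eq15 := congrArg Bool.toNat (key _ hm7 _ hm8 0 0 rfl)
  have eq16 := congrArg Bool.toNat (key _ hm7 _ hm9 1 0 rfl)
  have eq17 := congrArg Bool.toNat (key _ hm8 _ hm9 1 1 rfl)
  omega
end

section
/- Let p be a probabilistic empirical model satisfying Probabilistic No-Signalling. Then the possibilistic collapse of p satisfies No-Signalling. -/
/-- If a probabilistic empirical model satisfies Probabilistic No-Signalling,
then its possibilistic collapse satisfies No-Signalling. -/
theorem stmt_13 {n : ℕ} (hn : 1 ≤ n) (M O : Fin n → Type)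
    [∀ i, Fintype (M i)] [∀ i, Fintype (O i)] [∀ i, DecidableEq (O i)]
    (p : (∀ i, M i) → (∀ i, O i) → ℝ)
    -- p is a probability distribution on M × O
    (hpos : ∀ m o, 0 ≤ p m o)
    (hsum : ∑ m : ∀ i, M i, ∑ o : ∀ i, O i, p m o = 1)
    -- Probabilistic No-Signalling
    (hPNS : ∀ (i : Fin n) (m m' : ∀ j, M j), m i = m' i → ∀ o : O i,
        (0 < ∑ ob : ∀ j, O j, p m ob) → (0 < ∑ ob : ∀ j, O j, p m' ob) →
        (∑ ob : ∀ j, O j, if ob i = o then p m ob else 0) /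
            (∑ ob : ∀ j, O j, p m ob)
          = (∑ ob : ∀ j, O j, if ob i = o then p m' ob else 0) /
            (∑ ob : ∀ j, O j, p m' ob)) :
    -- No-Signalling for the possibilistic collapse e(m,o) ↔ p(m,o) > 0
    ∀ (i : Fin n) (m m' : ∀ j, M j), m i = m' i → ∀ o : O i,
      (∃ ob : ∀ j, O j, ob i = o ∧ 0 < p m ob) →
      (∃ ob : ∀ j, O j, 0 < p m' ob) →
      ∃ ob : ∀ j, O j, ob i = o ∧ 0 < p m' ob := by
  intro i m m' hmm o ⟨ob, hob, hpob⟩ ⟨ob', hpob'⟩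
  have hm : 0 < ∑ x : ∀ j, O j, p m x :=
    Finset.sum_pos' (fun x _ => hpos m x) ⟨ob, Finset.mem_univ _, hpob⟩
  have hm' : 0 < ∑ x : ∀ j, O j, p m' x :=
    Finset.sum_pos' (fun x _ => hpos m' x) ⟨ob', Finset.mem_univ _, hpob'⟩
  have hnum : 0 < ∑ x : ∀ j, O j, if x i = o then p m x else 0 :=
    Finset.sum_pos' (fun x _ => by split <;> simp [hpos m x])
      ⟨ob, Finset.mem_univ _, by simp [hob, hpob]⟩
  have h := hPNS i m m' hmm o hm hm'
  have hnum' : 0 < ∑ x : ∀ j, O j, if x i = o then p m' x else 0 := by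
    have hd := div_pos hnum hm
    rw [h] at hd
    have := mul_pos hd hm'
    rwa [div_mul_cancel₀] at this
    exact hm'.ne'
  obtain ⟨x, -, hx⟩ := Finset.exists_lt_of_sum_lt (by simpa using hnum' : (∑ _x : ∀ j, O j, (0:ℝ)) < _)
  by_cases hc : x i = o
  · exact ⟨x, hc, by simpa [hc] using hx⟩
  · simp [hc] at hx
end

section
/- Let q be a probabilistic hidden-variable model and let h be its possibilistic collapse. Then: (1) if q satisfies Probabilistic λ-Independence then h satisfies λ-Independence; (2) if q satisfies Probabilistic Outcome Independence then h satisfies Outcome Independence; (3) if q satisfies Probabilistic Parameter Independence then h satisfies Parameter Independence; (4) if q satisfies Probabilistic Locality then h satisfies Locality. -/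
private lemma sum_pos_iff' {α : Type*} [Fintype α] (f : α → ℝ) (hf : ∀ a, 0 ≤ f a) :
    0 < ∑ a, f a ↔ ∃ a, 0 < f a := by
  constructor
  · intro hs
    by_contra hc
    push_neg at hc
    have : ∑ a, f a ≤ 0 := Finset.sum_nonpos (fun a _ => hc a)
    linarith
  · rintro ⟨a, ha⟩
    exact Finset.sum_pos' (fun b _ => hf b) ⟨a, Finset.mem_univ a, ha⟩

private lemma num_pos' {a b : ℝ} (hb : 0 < b) (hab : 0 < a / b) : 0 < a := by
  rcases div_pos_iff.mp hab with ⟨h1, _⟩ | ⟨_, h2⟩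
  · exact h1
  · linarith


/-- The possibilistic collapse preserves the four hidden-variable properties:
Probabilistic λ-Independence, Outcome Independence, Parameter Independence
and Locality each imply their relational counterparts for the collapse. -/
theorem stmt_14 {n : ℕ} (hn : 1 ≤ n) (M O : Fin n → Type) (Λ : Type)
    [∀ i, Fintype (M i)] [∀ i, Fintype (O i)] [Fintype Λ]
    [∀ i, DecidableEq (M i)] [∀ i, DecidableEq (O i)]
    (q : (∀ i, M i) → (∀ i, O i) → Λ → ℝ)
    -- q is a probability distribution on M × O × Λ
    (hpos : ∀ m o l, 0 ≤ q m o l)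
    (hsum : ∑ m : ∀ i, M i, ∑ o : ∀ i, O i, ∑ l : Λ, q m o l = 1)
    (h : (∀ i, M i) → (∀ i, O i) → Λ → Prop)
    -- h is the possibilistic collapse of q
    (hcol : ∀ m o l, h m o l ↔ 0 < q m o l) :
    -- (1) Probabilistic λ-Independence implies λ-Independence
    ((∀ (m m' : ∀ j, M j) (l : Λ),
        (0 < ∑ ob : ∀ j, O j, ∑ l' : Λ, q m ob l') →
        (0 < ∑ ob : ∀ j, O j, ∑ l' : Λ, q m' ob l') →
        (∑ ob : ∀ j, O j, q m ob l) / (∑ ob : ∀ j, O j, ∑ l' : Λ, q m ob l')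
          = (∑ ob : ∀ j, O j, q m' ob l) /
            (∑ ob : ∀ j, O j, ∑ l' : Λ, q m' ob l')) →
      ∀ (m m' : ∀ j, M j) (l : Λ),
        (∃ (ob : ∀ j, O j) (l' : Λ), h m' ob l') →
        (∃ ob : ∀ j, O j, h m ob l) →
        ∃ ob : ∀ j, O j, h m' ob l) ∧
    -- (2) Probabilistic Outcome Independence implies Outcome Independence
    ((∀ (m : ∀ j, M j) (i : Fin n) (o : O i) (ob' : ∀ j, O j) (l : Λ),
        (0 < ∑ ob : ∀ j, O j, q m ob l) →
        (0 < ∑ o'' : O i, q m (Function.update ob' i o'') l) →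
        (∑ ob : ∀ j, O j, if ob i = o then q m ob l else 0) /
            (∑ ob : ∀ j, O j, q m ob l)
          = q m (Function.update ob' i o) l /
            (∑ o'' : O i, q m (Function.update ob' i o'') l)) →
      ∀ (m : ∀ j, M j) (i : Fin n) (o o' : ∀ j, O j) (l : Λ),
        h m o l → h m o' l → h m (Function.update o' i (o i)) l) ∧
    -- (3) Probabilistic Parameter Independence implies Parameter Independence
    ((∀ (i : Fin n) (o : O i) (m : ∀ j, M j) (l : Λ),
        (0 < ∑ ob : ∀ j, O j, q m ob l) →
        (∑ ob : ∀ j, O j, if ob i = o then q m ob l else 0) /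
            (∑ ob : ∀ j, O j, q m ob l)
          = (∑ m' : ∀ j, M j, if m' i = m i then
                (∑ ob : ∀ j, O j, if ob i = o then q m' ob l else 0) else 0) /
            (∑ m' : ∀ j, M j, if m' i = m i then
                (∑ ob : ∀ j, O j, q m' ob l) else 0)) →
      ∀ (i : Fin n) (m m' : ∀ j, M j), m i = m' i → ∀ (o : O i) (l : Λ),
        (∃ ob : ∀ j, O j, ob i = o ∧ h m ob l) →
        (∃ ob : ∀ j, O j, h m' ob l) →
        ∃ ob : ∀ j, O j, ob i = o ∧ h m' ob l) ∧
    -- (4) Probabilistic Locality implies Locality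
    ((∀ (m : ∀ j, M j) (o : ∀ j, O j) (l : Λ),
        (0 < ∑ ob : ∀ j, O j, q m ob l) →
        q m o l / (∑ ob : ∀ j, O j, q m ob l)
          = ∏ i : Fin n,
              ((∑ m' : ∀ j, M j, if m' i = m i then
                  (∑ ob : ∀ j, O j, if ob i = o i then q m' ob l else 0) else 0) /
               (∑ m' : ∀ j, M j, if m' i = m i then
                  (∑ ob : ∀ j, O j, q m' ob l) else 0))) →
      ∀ (m : ∀ j, M j) (o : ∀ j, O j) (l : Λ),
        (∃ ob : ∀ j, O j, h m ob l) →
        (∀ i : Fin n, ∃ (m' : ∀ j, M j) (o' : ∀ j, O j),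
            m' i = m i ∧ o' i = o i ∧ h m' o' l) →
        h m o l) := by
  
  refine ⟨?_, ?_, ?_, ?_⟩
  · -- (1) λ-Independence
    rintro hP m m' l ⟨ob0, l0, hob0⟩ ⟨ob1, hob1⟩
    rw [hcol] at hob0 hob1
    have nn2 : ∀ (mm : ∀ j, M j) (ob : ∀ j, O j), 0 ≤ ∑ l' : Λ, q mm ob l' :=
      fun mm ob => Finset.sum_nonneg fun l' _ => hpos mm ob l'
    have hqm : 0 < ∑ ob : ∀ j, O j, ∑ l' : Λ, q m ob l' :=
      (sum_pos_iff' _ (nn2 m)).mpr ⟨ob1, (sum_pos_iff' _ (fun _ => hpos m ob1 _)).mpr ⟨l, hob1⟩⟩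
    have hqm' : 0 < ∑ ob : ∀ j, O j, ∑ l' : Λ, q m' ob l' :=
      (sum_pos_iff' _ (nn2 m')).mpr ⟨ob0, (sum_pos_iff' _ (fun _ => hpos m' ob0 _)).mpr ⟨l0, hob0⟩⟩
    have heq := hP m m' l hqm hqm'
    have hnum : 0 < ∑ ob : ∀ j, O j, q m ob l :=
      (sum_pos_iff' _ (fun ob => hpos m ob l)).mpr ⟨ob1, hob1⟩
    have hdiv : 0 < (∑ ob : ∀ j, O j, q m' ob l) / (∑ ob : ∀ j, O j, ∑ l' : Λ, q m' ob l') :=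
      heq ▸ div_pos hnum hqm
    have hnum' : 0 < ∑ ob : ∀ j, O j, q m' ob l := num_pos' hqm' hdiv
    obtain ⟨ob, hob⟩ := (sum_pos_iff' _ (fun ob => hpos m' ob l)).mp hnum'
    exact ⟨ob, (hcol m' ob l).mpr hob⟩
  · -- (2) Outcome Independence
    intro hP m i o o' l ho ho'
    rw [hcol] at ho ho'
    rw [hcol]
    have hml : 0 < ∑ ob : ∀ j, O j, q m ob l :=
      (sum_pos_iff' _ (fun ob => hpos m ob l)).mpr ⟨o, ho⟩
    have hden : 0 < ∑ o'' : O i, q m (Function.update o' i o'') l := by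
      refine (sum_pos_iff' _ (fun o'' => hpos m _ l)).mpr ⟨o' i, ?_⟩
      rwa [Function.update_eq_self]
    have heq := hP m i (o i) o' l hml hden
    have hnum : 0 < ∑ ob : ∀ j, O j, if ob i = o i then q m ob l else 0 := by
      refine (sum_pos_iff' _ (fun ob => ?_)).mpr ⟨o, ?_⟩
      · split <;> [exact hpos m ob l; exact le_rfl]
      · simpa using ho
    have hdiv : 0 < q m (Function.update o' i (o i)) l /
        (∑ o'' : O i, q m (Function.update o' i o'') l) := heq ▸ div_pos hnum hml
    exact num_pos' hden hdiv
  · -- (3) Parameter Independence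
    rintro hP i m m' hmm o l ⟨ob0, hob0i, hob0⟩ ⟨ob1, hob1⟩
    rw [hcol] at hob0 hob1
    have hml : 0 < ∑ ob : ∀ j, O j, q m ob l :=
      (sum_pos_iff' _ (fun ob => hpos m ob l)).mpr ⟨ob0, hob0⟩
    have hm'l : 0 < ∑ ob : ∀ j, O j, q m' ob l :=
      (sum_pos_iff' _ (fun ob => hpos m' ob l)).mpr ⟨ob1, hob1⟩
    have h1 := hP i o m l hml
    have h2 := hP i o m' l hm'l
    rw [← hmm] at h2
    have hnum1 : 0 < ∑ ob : ∀ j, O j, if ob i = o then q m ob l else 0 := by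
      refine (sum_pos_iff' _ (fun ob => ?_)).mpr ⟨ob0, ?_⟩
      · split <;> [exact hpos m ob l; exact le_rfl]
      · rw [if_pos hob0i]; exact hob0
    have hdiv2 : 0 < (∑ ob : ∀ j, O j, if ob i = o then q m' ob l else 0) /
        (∑ ob : ∀ j, O j, q m' ob l) := by
      rw [h2, ← h1]; exact div_pos hnum1 hml
    have hnum2 : 0 < ∑ ob : ∀ j, O j, if ob i = o then q m' ob l else 0 :=
      num_pos' hm'l hdiv2
    obtain ⟨ob, hob⟩ := (sum_pos_iff' _ (fun ob => by
      split <;> [exact hpos m' ob l; exact le_rfl])).mp hnum2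
    by_cases hobi : ob i = o
    · exact ⟨ob, hobi, (hcol m' ob l).mpr (by rwa [if_pos hobi] at hob)⟩
    · rw [if_neg hobi] at hob; exact absurd hob (lt_irrefl 0)
  · -- (4) Locality
    rintro hP m o l ⟨ob0, hob0⟩ hloc
    rw [hcol] at hob0
    rw [hcol]
    have hml : 0 < ∑ ob : ∀ j, O j, q m ob l :=
      (sum_pos_iff' _ (fun ob => hpos m ob l)).mpr ⟨ob0, hob0⟩
    have heq := hP m o l hml
    have hprod : 0 < ∏ i : Fin n,
        ((∑ m' : ∀ j, M j, if m' i = m i then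
            (∑ ob : ∀ j, O j, if ob i = o i then q m' ob l else 0) else 0) /
         (∑ m' : ∀ j, M j, if m' i = m i then
            (∑ ob : ∀ j, O j, q m' ob l) else 0)) := by
      refine Finset.prod_pos fun i _ => ?_
      obtain ⟨m', o', hm', ho', hh⟩ := hloc i
      rw [hcol] at hh
      have hnum : 0 < ∑ m'' : ∀ j, M j, if m'' i = m i then
          (∑ ob : ∀ j, O j, if ob i = o i then q m'' ob l else 0) else 0 := by
        refine (sum_pos_iff' _ (fun m'' => ?_)).mpr ⟨m', ?_⟩
        · split
          · exact Finset.sum_nonneg fun ob _ => by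
              split <;> [exact hpos m'' ob l; exact le_rfl]
          · exact le_rfl
        · rw [if_pos hm']
          refine (sum_pos_iff' _ (fun ob => by
            split <;> [exact hpos m' ob l; exact le_rfl])).mpr ⟨o', ?_⟩
          rw [if_pos ho']; exact hh
      have hden : 0 < ∑ m'' : ∀ j, M j, if m'' i = m i then
          (∑ ob : ∀ j, O j, q m'' ob l) else 0 := by
        refine (sum_pos_iff' _ (fun m'' => ?_)).mpr ⟨m', ?_⟩
        · split
          · exact Finset.sum_nonneg fun ob _ => hpos m'' ob l
          · exact le_rfl
        · rw [if_pos hm']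
          exact (sum_pos_iff' _ (fun ob => hpos m' ob l)).mpr ⟨o', hh⟩
      exact div_pos hnum hden
    have : 0 < q m o l / (∑ ob : ∀ j, O j, q m ob l) := heq ▸ hprod
    exact num_pos' hml this
end

section
/- Consider the bipartite system type with M_1 = {X_1,X_2}, M_2 = {Y_1,Y_2}, O_1 = {a_1,a_2}, O_2 = {b_1,b_2}, and the empirical model e given by: e((X_1,Y_1),·) holds exactly on {(a_1,b_1),(a_1,b_2),(a_2,b_2)}; e((X_1,Y_2),·) exactly on {(a_1,b_1),(a_2,b_1),(a_2,b_2)}; e((X_2,Y_1),·) exactly on {(a_1,b_1),(a_2,b_1),(a_2,b_2)}; e((X_2,Y_2),·) exactly on {(a_1,b_1),(a_1,b_2),(a_2,b_2)}. Then e satisfies No-Signalling, but there is no probabilistic empirical model p satisfying Probabilistic No-Signalling whose possibilistic collapse is e. -/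
private lemma eta2 (m : Fin 2 → Bool) : m = ![m 0, m 1] := by
  funext i; fin_cases i <;> rfl

private lemma sum4 (f : (Fin 2 → Bool) → ℝ) :
    ∑ ob : Fin 2 → Bool, f ob
      = f ![false,false] + f ![false,true] + f ![true,false] + f ![true,true] := by
  rw [Fintype.sum_equiv (piFinTwoEquiv fun _ => Bool) f (fun p => f ![p.1, p.2])
    (fun x => congrArg f (eta2 x))]
  simp [Fintype.sum_prod_type]
  ring

/-- There is a bipartite relational model satisfying No-Signalling which is
not the possibilistic collapse of any probabilistic model satisfying
Probabilistic No-Signalling.  Measurements X₁,Y₁ are encoded as false and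
X₂,Y₂ as true; outcomes a₁,b₁ as false and a₂,b₂ as true. -/
theorem stmt_16 (e : (Fin 2 → Bool) → (Fin 2 → Bool) → Prop)
    (he1 : ∀ o, e ![false, false] o ↔ o ≠ ![true, false])
    (he2 : ∀ o, e ![false, true] o ↔ o ≠ ![false, true])
    (he3 : ∀ o, e ![true, false] o ↔ o ≠ ![false, true])
    (he4 : ∀ o, e ![true, true] o ↔ o ≠ ![true, false]) :
    (∀ (i : Fin 2) (m m' : Fin 2 → Bool), m i = m' i → ∀ o : Bool,
        (∃ ob : Fin 2 → Bool, ob i = o ∧ e m ob) →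
        (∃ ob : Fin 2 → Bool, e m' ob) →
        ∃ ob : Fin 2 → Bool, ob i = o ∧ e m' ob) ∧
    ¬ ∃ p : (Fin 2 → Bool) → (Fin 2 → Bool) → ℝ,
        (∀ m o, 0 ≤ p m o) ∧
        (∑ m : Fin 2 → Bool, ∑ o : Fin 2 → Bool, p m o = 1) ∧
        (∀ (i : Fin 2) (m m' : Fin 2 → Bool), m i = m' i → ∀ o : Bool,
            (0 < ∑ ob : Fin 2 → Bool, p m ob) →
            (0 < ∑ ob : Fin 2 → Bool, p m' ob) →
            (∑ ob : Fin 2 → Bool, if ob i = o then p m ob else 0) /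
                (∑ ob : Fin 2 → Bool, p m ob)
              = (∑ ob : Fin 2 → Bool, if ob i = o then p m' ob else 0) /
                (∑ ob : Fin 2 → Bool, p m' ob)) ∧
        (∀ m o, 0 < p m o ↔ e m o) := by
  constructor
  · intro i m m' _ o _ _
    refine ⟨if o then ![true,true] else ![false,false], ?_, ?_⟩
    · cases o <;> fin_cases i <;> simp
    · rw [eta2 m']
      cases h0 : m' 0 <;> cases h1 : m' 1 <;> cases o <;>
        simp [he1, he2, he3, he4] <;> decide
  · rintro ⟨p, hpos, _, hns, hcol⟩
    -- abbreviations for outcomes and contexts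
    set FF : Fin 2 → Bool := ![false,false] with hFF
    set FT : Fin 2 → Bool := ![false,true] with hFT
    set TF : Fin 2 → Bool := ![true,false] with hTF
    set TT : Fin 2 → Bool := ![true,true] with hTT
    -- zero entries
    have z1 : p FF TF = 0 := by
      by_contra h
      have := (hcol FF TF).mp (lt_of_le_of_ne (hpos FF TF) (Ne.symm h))
      exact ((he1 TF).mp this) rfl
    have z2 : p FT FT = 0 := by
      by_contra h
      have := (hcol FT FT).mp (lt_of_le_of_ne (hpos FT FT) (Ne.symm h))
      exact ((he2 FT).mp this) rfl
    have z3 : p TF FT = 0 := by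
      by_contra h
      have := (hcol TF FT).mp (lt_of_le_of_ne (hpos TF FT) (Ne.symm h))
      exact ((he3 FT).mp this) rfl
    have z4 : p TT TF = 0 := by
      by_contra h
      have := (hcol TT TF).mp (lt_of_le_of_ne (hpos TT TF) (Ne.symm h))
      exact ((he4 TF).mp this) rfl
    -- positive entries
    have pa1 : 0 < p FF FF := (hcol FF FF).mpr ((he1 FF).mpr (by decide))
    have pa2 : 0 < p FF FT := (hcol FF FT).mpr ((he1 FT).mpr (by decide))
    have pb1 : 0 < p FT FF := (hcol FT FF).mpr ((he2 FF).mpr (by decide))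
    have pb2 : 0 < p FT TF := (hcol FT TF).mpr ((he2 TF).mpr (by decide))
    have pb3 : 0 < p FT TT := (hcol FT TT).mpr ((he2 TT).mpr (by decide))
    have pc1 : 0 < p TF FF := (hcol TF FF).mpr ((he3 FF).mpr (by decide))
    have pc2 : 0 < p TF TF := (hcol TF TF).mpr ((he3 TF).mpr (by decide))
    have pd1 : 0 < p TT FF := (hcol TT FF).mpr ((he4 FF).mpr (by decide))
    have pd2 : 0 < p TT FT := (hcol TT FT).mpr ((he4 FT).mpr (by decide))
    have pa3 : 0 < p FF TT := (hcol FF TT).mpr ((he1 TT).mpr (by decide))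
    have pc3 : 0 < p TF TT := (hcol TF TT).mpr ((he3 TT).mpr (by decide))
    have pd3 : 0 < p TT TT := (hcol TT TT).mpr ((he4 TT).mpr (by decide))
    -- totals
    have SA : ∑ ob : Fin 2 → Bool, p FF ob = p FF FF + p FF FT + p FF TT := by
      rw [sum4]; rw [z1]; ring
    have SB : ∑ ob : Fin 2 → Bool, p FT ob = p FT FF + p FT TF + p FT TT := by
      rw [sum4]; rw [z2]; ring
    have SC : ∑ ob : Fin 2 → Bool, p TF ob = p TF FF + p TF TF + p TF TT := by
      rw [sum4]; rw [z3]; ring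
    have SD : ∑ ob : Fin 2 → Bool, p TT ob = p TT FF + p TT FT + p TT TT := by
      rw [sum4]; rw [z4]; ring
    have hSA : (0:ℝ) < ∑ ob : Fin 2 → Bool, p FF ob := by rw [SA]; linarith
    have hSB : (0:ℝ) < ∑ ob : Fin 2 → Bool, p FT ob := by rw [SB]; linarith
    have hSC : (0:ℝ) < ∑ ob : Fin 2 → Bool, p TF ob := by rw [SC]; linarith
    have hSD : (0:ℝ) < ∑ ob : Fin 2 → Bool, p TT ob := by rw [SD]; linarith
    -- marginal sums
    have mrg : ∀ (m : Fin 2 → Bool) (i : Fin 2),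
        ∑ ob : Fin 2 → Bool, (if ob i = false then p m ob else 0)
          = (if FF i = false then p m FF else 0) + (if FT i = false then p m FT else 0)
            + (if TF i = false then p m TF else 0) + (if TT i = false then p m TT else 0) :=
      fun m i => sum4 _
    -- four PNS equations
    have E1 := hns 0 FF FT rfl false hSA hSB
    have E2 := hns 0 TF TT rfl false hSC hSD
    have E3 := hns 1 FF TF rfl false hSA hSC
    have E4 := hns 1 FT TT rfl false hSB hSD
    rw [mrg, mrg] at E1 E2 E3 E4
    simp only [hFF, hFT, hTF, hTT, Matrix.cons_val_zero, Matrix.cons_val_one,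
      Matrix.head_cons, if_true, if_pos rfl] at E1 E2 E3 E4
    norm_num at E1 E2 E3 E4
    simp only [← hFF, ← hFT, ← hTF, ← hTT] at E1 E2 E3 E4
    simp only [z1, z2, z3, z4, add_zero] at E1 E2 E3 E4
    -- strict inequalities between ratios
    have h1 : p FF FF / (∑ ob : Fin 2 → Bool, p FF ob)
        < (p FF FF + p FF FT) / (∑ ob : Fin 2 → Bool, p FF ob) :=
      (div_lt_div_iff_of_pos_right hSA).mpr (by linarith)
    have h2 : p TF FF / (∑ ob : Fin 2 → Bool, p TF ob)
        < (p TF FF + p TF TF) / (∑ ob : Fin 2 → Bool, p TF ob) :=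
      (div_lt_div_iff_of_pos_right hSC).mpr (by linarith)
    have h3 : p TT FF / (∑ ob : Fin 2 → Bool, p TT ob)
        < (p TT FF + p TT FT) / (∑ ob : Fin 2 → Bool, p TT ob) :=
      (div_lt_div_iff_of_pos_right hSD).mpr (by linarith)
    have h4 : p FT FF / (∑ ob : Fin 2 → Bool, p FT ob)
        < (p FT FF + p FT TF) / (∑ ob : Fin 2 → Bool, p FT ob) :=
      (div_lt_div_iff_of_pos_right hSB).mpr (by linarith)
    linarith [E1, E2, E3, E4, h1, h2, h3, h4]
end

section
/- Let h be a nonempty relational hidden-variable model over finite sets satisfying Measurement Locality, λ-Independence, and Locality. Define L = #{λ : h(λ)↓}, N = #{m̄ : h(m̄)↓}, K_{m̄,λ} = #{ō : h(m̄,ō,λ)}, W_{m̄,λ} = K_{m̄,λ}·L·N, and define q^h : M × O × Λ → [0,1] by q^h(m̄,ō,λ) = 1/W_{m̄,λ} if h(m̄,ō,λ) holds and q^h(m̄,ō,λ) = 0 otherwise. Then q^h is a probabilistic hidden-variable model (its total sum is 1), its possibilistic collapse is h, and q^h satisfies Probabilistic Measurement Locality, Probabilistic λ-Independence, and Probabilistic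 Locality. -/
lemma sum_pi_prod17 {n : ℕ} {δ : Fin n → Type} [∀ i, Fintype (δ i)]
    (f : ∀ i, δ i → ℝ) :
    ∑ x : ∀ i, δ i, ∏ i, f i (x i) = ∏ i, ∑ a, f i a :=
  (Fintype.prod_sum f).symm

lemma sum_indicator_card17 {α : Type*} [Fintype α] (p : α → Prop) [DecidablePred p] (c : ℝ) :
    ∑ x, (if p x then c else 0) = (Nat.card {x // p x} : ℝ) * c := by
  classical
  rw [Nat.card_eq_fintype_card, Fintype.card_subtype]
  rw [Finset.sum_ite, Finset.sum_const_zero, add_zero, Finset.sum_const, nsmul_eq_mul]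

lemma card_pos17 {α : Type*} [Finite α] (x : α) : (0:ℝ) < (Nat.card α : ℝ) := by
  haveI : Nonempty α := ⟨x⟩
  exact_mod_cast Nat.card_pos

lemma arith_a17 (K L N : ℝ) (hK : K ≠ 0) : K * (1/(K*L*N)) = 1/(L*N) := by
  rw [mul_one_div, mul_assoc, div_mul_cancel_left₀ hK, one_div]

lemma arith_b17 (L N : ℝ) (hL : L ≠ 0) : L * (1/(L*N)) = 1/N := by
  rw [mul_one_div, div_mul_cancel_left₀ hL, one_div]

lemma arith_c17 (s ci P : ℝ) (hci : ci ≠ 0) (hP : P ≠ 0) :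
    s * P * (1/(ci*P)) = s/ci := by
  field_simp

lemma sum_pi_prod_pin17 {n : ℕ} {δ : Fin n → Type} [∀ i, Fintype (δ i)]
    [∀ i, DecidableEq (δ i)]
    (f : ∀ i, δ i → ℝ) (i : Fin n) (a : δ i) :
    ∑ x : ∀ j, δ j, (if x i = a then ∏ j, f j (x j) else 0)
      = f i a * ∏ j ∈ Finset.univ.erase i, ∑ b, f j b := by
  classical
  have key : ∀ x : ∀ j, δ j,
      (if x i = a then ∏ j, f j (x j) else 0)
        = ∏ j, (fun j (y : δ j) => if hj : j = i then (if hj ▸ y = a then f j y else 0) else f j y) j (x j) := by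
    intro x
    by_cases hx : x i = a
    · rw [if_pos hx]
      refine Finset.prod_congr rfl fun j _ => ?_
      by_cases hj : j = i
      · subst hj; simp [hx]
      · simp only [dif_neg hj]
    · rw [if_neg hx]
      symm
      apply Finset.prod_eq_zero (Finset.mem_univ i)
      simp [hx]
  rw [Finset.sum_congr rfl fun x _ => key x,
    sum_pi_prod17 (fun j (y : δ j) => if hj : j = i then (if hj ▸ y = a then f j y else 0) else f j y)]
  rw [← Finset.mul_prod_erase _ _ (Finset.mem_univ i)]
  congr 1
  · simp
  · refine Finset.prod_congr rfl fun j hj => ?_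
    rw [Finset.mem_erase] at hj
    refine Finset.sum_congr rfl fun b _ => ?_
    simp only [dif_neg hj.1]

lemma sum_pi_prod_pin2_17 {n : ℕ} {δ : Fin n → Type} [∀ i, Fintype (δ i)]
    [∀ i, DecidableEq (δ i)]
    (f : ∀ i, δ i → ℝ) (i : Fin n) (gg : δ i → ℝ) (a : δ i) :
    ∑ x : ∀ j, δ j, (if x i = a then gg (x i) * ∏ j ∈ Finset.univ.erase i, f j (x j) else 0)
      = gg a * ∏ j ∈ Finset.univ.erase i, ∑ b, f j b := by
  classical
  have key : ∀ x : ∀ j, δ j,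
      (if x i = a then gg (x i) * ∏ j ∈ Finset.univ.erase i, f j (x j) else 0)
        = (if x i = a then
            ∏ j, (fun j (y : δ j) => if hj : j = i then gg (hj ▸ y) else f j y) j (x j) else 0) := by
    intro x
    by_cases hx : x i = a
    · rw [if_pos hx, if_pos hx,
        ← Finset.mul_prod_erase Finset.univ _ (Finset.mem_univ i)]
      congr 1
      · simp
      · refine Finset.prod_congr rfl fun j hj => ?_
        rw [Finset.mem_erase] at hj
        simp only [dif_neg hj.1]
    · rw [if_neg hx, if_neg hx]
  rw [Finset.sum_congr rfl fun x _ => key x]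
  refine (sum_pi_prod_pin17
    (fun j (y : δ j) => if hj : j = i then gg (hj ▸ y) else f j y) i a).trans ?_
  congr 1
  · simp
  · refine Finset.prod_congr rfl fun j hj => ?_
    rw [Finset.mem_erase] at hj
    exact Finset.sum_congr rfl fun b _ => by simp only [dif_neg hj.1]

lemma arith_d17 (P L N : ℝ) : 1/(P*L*N) = (1/P)*(1/(L*N)) := by
  rw [div_mul_div_comm, one_mul, mul_assoc]

lemma arith_e17 (a P c : ℝ) (hP : P ≠ 0) (hc : c ≠ 0) :
    ((a*P)*c)/((1*P)*c) = a := by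
  rw [one_mul, mul_assoc, mul_div_cancel_right₀ _ (mul_ne_zero hP hc)]

lemma ite_const_mul17 (p : Prop) [Decidable p] (c : ℝ) :
    (if p then c else 0) = (if p then 1 else 0) * c := by split <;> simp

lemma ite_mul_zero17 (p : Prop) [Decidable p] (x c : ℝ) :
    (if p then x * c else 0) = (if p then x else 0) * c := by split <;> simp




/-- From a nonempty relational hidden-variable model h (over finite sets)
satisfying Measurement Locality, λ-Independence and Locality, the canonical
probabilistic model q^h (uniform weights 1/(K_{m,λ}·L·N) on the support of h)
is a probability distribution whose possibilistic collapse is h, and it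
satisfies Probabilistic Measurement Locality, Probabilistic λ-Independence,
and Probabilistic Locality. -/
theorem stmt_17 {n : ℕ} (hn : 1 ≤ n) (M O : Fin n → Type) (Λ : Type)
    [∀ i, Fintype (M i)] [∀ i, Fintype (O i)] [Fintype Λ]
    [∀ i, DecidableEq (M i)] [∀ i, DecidableEq (O i)]
    (h : (∀ i, M i) → (∀ i, O i) → Λ → Prop)
    -- h is nonempty
    (hne : ∃ (m : ∀ i, M i) (o : ∀ i, O i) (l : Λ), h m o l)
    -- Measurement Locality
    (hML : ∀ (m : ∀ j, M j) (l : Λ),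
        (∃ o : ∀ j, O j, h m o l) ↔
        ∀ i : Fin n, ∃ (m' : ∀ j, M j) (o' : ∀ j, O j), m' i = m i ∧ h m' o' l)
    -- λ-Independence
    (hLI : ∀ (m m' : ∀ j, M j) (l : Λ),
        (∃ (ob : ∀ j, O j) (l' : Λ), h m' ob l') →
        (∃ ob : ∀ j, O j, h m ob l) →
        ∃ ob : ∀ j, O j, h m' ob l)
    -- Locality
    (hL : ∀ (m : ∀ j, M j) (o : ∀ j, O j) (l : Λ),
        (∃ ob : ∀ j, O j, h m ob l) →
        (∀ i : Fin n, ∃ (m' : ∀ j, M j) (o' : ∀ j, O j),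
            m' i = m i ∧ o' i = o i ∧ h m' o' l) →
        h m o l)
    (q : (∀ i, M i) → (∀ i, O i) → Λ → ℝ)
    -- q = q^h : weight 1/(K_{m,λ}·L·N) on the support of h, 0 elsewhere
    (hq_pos : ∀ m o l, h m o l →
        q m o l = 1 /
          ((Nat.card {o' : ∀ i, O i // h m o' l} : ℝ) *
           (Nat.card {l' : Λ // ∃ (m' : ∀ i, M i) (o' : ∀ i, O i), h m' o' l'} : ℝ) *
           (Nat.card {m' : ∀ i, M i // ∃ (o' : ∀ i, O i) (l' : Λ), h m' o' l'} : ℝ)))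
    (hq_zero : ∀ m o l, ¬ h m o l → q m o l = 0) :
    -- q is a probability distribution
    (∑ m : ∀ i, M i, ∑ o : ∀ i, O i, ∑ l : Λ, q m o l = 1) ∧
    -- the possibilistic collapse of q is h
    (∀ m o l, 0 < q m o l ↔ h m o l) ∧
    -- Probabilistic Measurement Locality
    (∀ m : ∀ i, M i,
        (∑ o : ∀ i, O i, ∑ l : Λ, q m o l)
          = ∏ i : Fin n, (∑ m' : ∀ j, M j, if m' i = m i then
              (∑ o : ∀ j, O j, ∑ l : Λ, q m' o l) else 0)) ∧
    -- Probabilistic λ-Independence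
    (∀ (m m' : ∀ j, M j) (l : Λ),
        (0 < ∑ o : ∀ j, O j, ∑ l' : Λ, q m o l') →
        (0 < ∑ o : ∀ j, O j, ∑ l' : Λ, q m' o l') →
        (∑ o : ∀ j, O j, q m o l) / (∑ o : ∀ j, O j, ∑ l' : Λ, q m o l')
          = (∑ o : ∀ j, O j, q m' o l) /
            (∑ o : ∀ j, O j, ∑ l' : Λ, q m' o l')) ∧
    -- Probabilistic Locality
    (∀ (m : ∀ j, M j) (o : ∀ j, O j) (l : Λ),
        (0 < ∑ ob : ∀ j, O j, q m ob l) →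
        q m o l / (∑ ob : ∀ j, O j, q m ob l)
          = ∏ i : Fin n,
              ((∑ m' : ∀ j, M j, if m' i = m i then
                  (∑ ob : ∀ j, O j, if ob i = o i then q m' ob l else 0) else 0) /
               (∑ m' : ∀ j, M j, if m' i = m i then
                  (∑ ob : ∀ j, O j, q m' ob l) else 0))) := by
  classical
  obtain ⟨m₀, o₀, l₀, h₀⟩ := hne
  set Lr : ℝ := (Nat.card {l' : Λ // ∃ (m' : ∀ i, M i) (o' : ∀ i, O i), h m' o' l'} : ℝ) with hLr
  set Nr : ℝ := (Nat.card {m' : ∀ i, M i // ∃ (o' : ∀ i, O i) (l' : Λ), h m' o' l'} : ℝ) with hNr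
  have hLrpos : (0:ℝ) < Lr := by
    rw [hLr]; exact card_pos17 ⟨l₀, m₀, o₀, h₀⟩
  have hNrpos : (0:ℝ) < Nr := by
    rw [hNr]; exact card_pos17 ⟨m₀, o₀, l₀, h₀⟩
  have F2 : ∀ (m : ∀ i, M i) (l : Λ), (∃ o' l', h m o' l') → (∃ m' o', h m' o' l) →
      ∃ o', h m o' l := by
    rintro m l hm0 ⟨m₁, o₁, h₁⟩
    exact hLI m₁ m l hm0 ⟨o₁, h₁⟩
  have hprod : ∀ (m : ∀ i, M i) (o : ∀ i, O i) (l : Λ),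
      h m o l ↔ ∀ i, ∃ m' o', m' i = m i ∧ o' i = o i ∧ h m' o' l := by
    intro m o l
    constructor
    · intro hh i; exact ⟨m, o, rfl, rfl, hh⟩
    · intro hP
      have hml : ∃ ob, h m ob l := by
        rw [hML]
        intro i
        obtain ⟨m', o', h1, _, h3⟩ := hP i
        exact ⟨m', o', h1, h3⟩
      exact hL m o l hml hP
  have hmprod : ∀ (m : ∀ i, M i),
      (∃ o' l', h m o' l') ↔ ∀ i, ∃ m', m' i = m i ∧ ∃ o' l', h m' o' l' := by
    intro m
    constructor
    · intro hm i; exact ⟨m, rfl, hm⟩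
    · intro hS
      have hml : ∃ ob, h m ob l₀ := by
        rw [hML]
        intro i
        obtain ⟨m', h1, hm'⟩ := hS i
        obtain ⟨ob, hob⟩ := F2 m' l₀ hm' ⟨m₀, o₀, h₀⟩
        exact ⟨m', ob, h1, hob⟩
      obtain ⟨ob, hob⟩ := hml
      exact ⟨ob, l₀, hob⟩
  -- C1
  have C1 : ∀ (m : ∀ i, M i) (l : Λ),
      ∑ o, q m o l = if (∃ ob, h m ob l) then 1/(Lr*Nr) else 0 := by
    intro m l
    by_cases hml : ∃ ob, h m ob l
    · rw [if_pos hml]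
      have hKpos : (0:ℝ) < (Nat.card {o' : ∀ i, O i // h m o' l} : ℝ) := by
        obtain ⟨ob, hob⟩ := hml
        exact card_pos17 ⟨ob, hob⟩
      have hq' : ∀ o, q m o l
          = if h m o l then 1/((Nat.card {o' : ∀ i, O i // h m o' l} : ℝ)*Lr*Nr) else 0 := by
        intro o; by_cases ho : h m o l
        · rw [if_pos ho, hq_pos m o l ho]
        · rw [if_neg ho, hq_zero m o l ho]
      rw [Finset.sum_congr rfl fun o _ => hq' o, sum_indicator_card17]
      exact arith_a17 _ _ _ (ne_of_gt hKpos)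
    · rw [if_neg hml]
      exact Finset.sum_eq_zero fun o _ => hq_zero m o l fun ho => hml ⟨o, ho⟩
  -- C2
  have C2 : ∀ m, ∑ o, ∑ l, q m o l = if (∃ o' l', h m o' l') then 1/Nr else 0 := by
    intro m
    rw [Finset.sum_comm, Finset.sum_congr rfl fun l _ => C1 m l]
    by_cases hm : ∃ o' l', h m o' l'
    · rw [if_pos hm]
      have key : ∀ l : Λ, (if (∃ ob, h m ob l) then 1/(Lr*Nr) else 0)
          = if (∃ m' o', h m' o' l) then 1/(Lr*Nr) else 0 := by
        intro l
        refine if_congr ⟨fun ⟨ob, hob⟩ => ⟨m, ob, hob⟩, fun hl => F2 m l hm hl⟩ rfl rfl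
      rw [Finset.sum_congr rfl fun l _ => key l, sum_indicator_card17, ← hLr]
      exact arith_b17 _ _ (ne_of_gt hLrpos)
    · rw [if_neg hm]
      exact Finset.sum_eq_zero fun l _ => if_neg fun ⟨ob, hob⟩ => hm ⟨ob, l, hob⟩
  -- G1
  have G1 : ∑ m, ∑ o, ∑ l, q m o l = 1 := by
    rw [Finset.sum_congr rfl fun m _ => C2 m, sum_indicator_card17, ← hNr]
    rw [mul_one_div, div_self (ne_of_gt hNrpos)]
  -- G2
  have G2 : ∀ m o l, 0 < q m o l ↔ h m o l := by
    intro m o l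
    constructor
    · intro hpos
      by_contra hno
      rw [hq_zero m o l hno] at hpos
      exact lt_irrefl 0 hpos
    · intro hh
      rw [hq_pos m o l hh]
      have h1 : (0:ℝ) < (Nat.card {o' : ∀ i, O i // h m o' l} : ℝ) := card_pos17 ⟨o, hh⟩
      exact div_pos one_pos (mul_pos (mul_pos h1 hLrpos) hNrpos)
  -- G4
  have hpos_hm : ∀ m, (0 < ∑ o, ∑ l', q m o l') → ∃ o' l', h m o' l' := by
    intro m hp
    by_contra hm
    rw [C2 m, if_neg hm] at hp
    exact lt_irrefl 0 hp
  have G4 : ∀ (m m' : ∀ j, M j) (l : Λ),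
      (0 < ∑ o, ∑ l', q m o l') → (0 < ∑ o, ∑ l', q m' o l') →
      (∑ o, q m o l) / (∑ o, ∑ l', q m o l')
        = (∑ o, q m' o l) / (∑ o, ∑ l', q m' o l') := by
    intro m m' l hp hp'
    have hm := hpos_hm m hp
    have hm' := hpos_hm m' hp'
    have e : ∀ mm : ∀ j, M j, (∃ o' l', h mm o' l') →
        ∑ o, q mm o l = if (∃ m₁ o₁, h m₁ o₁ l) then 1/(Lr*Nr) else 0 := by
      intro mm hmm
      rw [C1]
      exact if_congr ⟨fun ⟨ob, hob⟩ => ⟨mm, ob, hob⟩, fun hl => F2 mm l hmm hl⟩ rfl rfl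
    rw [e m hm, e m' hm', C2 m, C2 m', if_pos hm, if_pos hm']
  -- G3
  set s : ∀ j, M j → ℝ :=
    fun j a => if (∃ m' : ∀ k, M k, m' j = a ∧ ∃ o' l', h m' o' l') then 1 else 0 with hs
  set c : Fin n → ℝ := fun j => ∑ a, s j a with hc
  have hind : ∀ m' : ∀ i, M i,
      (if (∃ o' l', h m' o' l') then (1:ℝ) else 0) = ∏ j, s j (m' j) := by
    intro m'
    by_cases hm : ∃ o' l', h m' o' l'
    · rw [if_pos hm]
      symm
      apply Finset.prod_eq_one
      intro j _
      rw [hs]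
      exact if_pos ((hmprod m').1 hm j)
    · rw [if_neg hm]
      symm
      have hex : ∃ j, ¬ ∃ m'' : ∀ k, M k, m'' j = m' j ∧ ∃ o' l', h m'' o' l' := by
        by_contra hA
        push_neg at hA
        exact hm ((hmprod m').2 hA)
      obtain ⟨j, hj⟩ := hex
      apply Finset.prod_eq_zero (Finset.mem_univ j)
      rw [hs]
      exact if_neg hj
  have hcpos : ∀ j, 0 < c j := by
    intro j
    simp only [hc]
    apply Finset.sum_pos' (fun a _ => by simp only [hs]; split <;> norm_num)
    refine ⟨m₀ j, Finset.mem_univ _, ?_⟩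
    simp only [hs]
    rw [if_pos ⟨m₀, rfl, o₀, l₀, h₀⟩]
    norm_num
  have hNprod : Nr = ∏ j, c j := by
    have h1 : ∑ m' : ∀ i, M i, (if (∃ o' l', h m' o' l') then (1:ℝ) else 0) = Nr := by
      rw [sum_indicator_card17, mul_one, hNr]
    rw [← h1, Finset.sum_congr rfl fun m' _ => hind m', sum_pi_prod17]
  have G3 : ∀ m : ∀ i, M i, (∑ o, ∑ l, q m o l)
      = ∏ i, ∑ m', if m' i = m i then (∑ o, ∑ l, q m' o l) else 0 := by
    intro m
    have inner : ∀ i, (∑ m' : ∀ j, M j, if m' i = m i then (∑ o, ∑ l, q m' o l) else 0)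
        = s i (m i) / c i := by
      intro i
      have step1 : ∀ m' : ∀ j, M j, (if m' i = m i then (∑ o, ∑ l, q m' o l) else 0)
          = (if m' i = m i then ∏ j, s j (m' j) else 0) * (1/Nr) := by
        intro m'
        rw [C2 m', ite_const_mul17 (∃ o' l', h m' o' l') (1/Nr), hind m', ite_mul_zero17]
      rw [Finset.sum_congr rfl fun m' _ => step1 m', ← Finset.sum_mul,
        sum_pi_prod_pin17 s i (m i)]
      have herase : (∏ j ∈ Finset.univ.erase i, ∑ b, s j b) = ∏ j ∈ Finset.univ.erase i, c j :=
        rfl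
      rw [herase]
      have hNi : Nr = c i * ∏ j ∈ Finset.univ.erase i, c j := by
        rw [hNprod, Finset.mul_prod_erase Finset.univ c (Finset.mem_univ i)]
      rw [hNi]
      exact arith_c17 _ _ _ (ne_of_gt (hcpos i))
        (ne_of_gt (Finset.prod_pos fun j _ => hcpos j))
    rw [C2 m, Finset.prod_congr rfl fun i _ => inner i, Finset.prod_div_distrib,
      ← hind m, ← hNprod, ite_const_mul17, mul_one_div]
  -- G5
  have hpos_hml : ∀ (m : ∀ j, M j) (l : Λ), (0 < ∑ ob, q m ob l) → ∃ ob, h m ob l := by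
    intro m l hp
    by_contra hml
    rw [C1 m l, if_neg hml] at hp
    exact lt_irrefl 0 hp
  have G5 : ∀ (m : ∀ j, M j) (o : ∀ j, O j) (l : Λ),
      (0 < ∑ ob, q m ob l) →
      q m o l / (∑ ob, q m ob l)
        = ∏ i, ((∑ m' : ∀ j, M j, if m' i = m i then
              (∑ ob, if ob i = o i then q m' ob l else 0) else 0) /
            (∑ m' : ∀ j, M j, if m' i = m i then (∑ ob, q m' ob l) else 0)) := by
    intro m o l hp
    have hml : ∃ ob, h m ob l := hpos_hml m l hp
    set g : ∀ j, M j → O j → ℝ := fun j a b =>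
      if (∃ (m' : ∀ kk, M kk) (o' : ∀ kk, O kk), m' j = a ∧ o' j = b ∧ h m' o' l) then 1 else 0
      with hg
    set k : ∀ j, M j → ℝ := fun j a => ∑ b, g j a b with hk
    set d : ∀ j, M j → ℝ := fun j a =>
      if (∃ (m' : ∀ i, M i) (o' : ∀ i, O i), m' j = a ∧ h m' o' l) then 1 else 0 with hd
    set G : ∀ j, M j → O j → ℝ := fun j a b => g j a b / k j a with hG
    set e : Fin n → ℝ := fun j => ∑ a, d j a with he
    have hk_pos : ∀ j a, (∃ (m' : ∀ i, M i) (o' : ∀ i, O i), m' j = a ∧ h m' o' l) →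
        0 < k j a := by
      rintro j a ⟨m', o', hma, hmo⟩
      simp only [hk]
      apply Finset.sum_pos' (fun b _ => by simp only [hg]; split <;> norm_num)
      refine ⟨o' j, Finset.mem_univ _, ?_⟩
      simp only [hg]
      rw [if_pos ⟨m', o', hma, rfl, hmo⟩]
      norm_num
    have hk_zero : ∀ j a, ¬(∃ (m' : ∀ i, M i) (o' : ∀ i, O i), m' j = a ∧ h m' o' l) →
        k j a = 0 := by
      intro j a hno
      simp only [hk]
      apply Finset.sum_eq_zero
      intro b _
      simp only [hg]
      rw [if_neg]
      rintro ⟨m', o', hma, _, hmo⟩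
      exact hno ⟨m', o', hma, hmo⟩
    have hGsum : ∀ j a, ∑ b, G j a b = d j a := by
      intro j a
      simp only [hG]
      rw [← Finset.sum_div]
      have hksum : (∑ b, g j a b) = k j a := rfl
      rw [hksum]
      by_cases hcond : ∃ (m' : ∀ i, M i) (o' : ∀ i, O i), m' j = a ∧ h m' o' l
      · rw [div_self (ne_of_gt (hk_pos j a hcond))]
        simp only [hd]
        rw [if_pos hcond]
      · rw [hk_zero j a hcond, zero_div]
        simp only [hd]
        rw [if_neg hcond]
    have hindh : ∀ (m' : ∀ i, M i) (o' : ∀ i, O i),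
        (if h m' o' l then (1:ℝ) else 0) = ∏ j, g j (m' j) (o' j) := by
      intro m' o'
      by_cases hh : h m' o' l
      · rw [if_pos hh]
        symm
        apply Finset.prod_eq_one
        intro j _
        simp only [hg]
        exact if_pos ((hprod m' o' l).1 hh j)
      · rw [if_neg hh]
        symm
        have hex : ∃ j, ¬ ∃ (m'' : ∀ kk, M kk) (o'' : ∀ kk, O kk),
            m'' j = m' j ∧ o'' j = o' j ∧ h m'' o'' l := by
          by_contra hA
          push_neg at hA
          exact hh ((hprod m' o' l).2 hA)
        obtain ⟨j, hj⟩ := hex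
        apply Finset.prod_eq_zero (Finset.mem_univ j)
        simp only [hg]
        exact if_neg hj
    have hKprod : ∀ m' : ∀ i, M i,
        (Nat.card {o' : ∀ i, O i // h m' o' l} : ℝ) = ∏ j, k j (m' j) := by
      intro m'
      have h1 : ∑ o' : ∀ i, O i, (if h m' o' l then (1:ℝ) else 0)
          = (Nat.card {o' : ∀ i, O i // h m' o' l} : ℝ) := by
        rw [sum_indicator_card17, mul_one]
      rw [← h1, Finset.sum_congr rfl fun o' _ => hindh m' o']
      refine (sum_pi_prod17 (fun j b => g j (m' j) b)).trans ?_
      rfl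
    have hqrep : ∀ (m' : ∀ i, M i) (o' : ∀ i, O i),
        q m' o' l = (∏ j, G j (m' j) (o' j)) * (1/(Lr*Nr)) := by
      intro m' o'
      by_cases hh : h m' o' l
      · rw [hq_pos m' o' l hh, hKprod m']
        have hGprod : ∏ j, G j (m' j) (o' j) = 1 / ∏ j, k j (m' j) := by
          simp only [hG]
          rw [Finset.prod_div_distrib]
          have hone : ∏ j, g j (m' j) (o' j) = 1 :=
            Finset.prod_eq_one fun j _ => by
              simp only [hg]; exact if_pos ((hprod m' o' l).1 hh j)
          rw [hone]
        rw [hGprod, arith_d17]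
      · rw [hq_zero m' o' l hh]
        symm
        rw [mul_eq_zero]
        left
        have hex : ∃ j, ¬ ∃ (m'' : ∀ kk, M kk) (o'' : ∀ kk, O kk),
            m'' j = m' j ∧ o'' j = o' j ∧ h m'' o'' l := by
          by_contra hA
          push_neg at hA
          exact hh ((hprod m' o' l).2 hA)
        obtain ⟨j, hj⟩ := hex
        apply Finset.prod_eq_zero (Finset.mem_univ j)
        simp only [hG, hg]
        rw [if_neg hj, zero_div]
    have hsum_ob : ∀ m' : ∀ i, M i,
        ∑ ob, q m' ob l = (∏ j, d j (m' j)) * (1/(Lr*Nr)) := by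
      intro m'
      rw [Finset.sum_congr rfl fun ob _ => hqrep m' ob, ← Finset.sum_mul]
      congr 1
      refine (sum_pi_prod17 (fun j b => G j (m' j) b)).trans ?_
      exact Finset.prod_congr rfl fun j _ => hGsum j (m' j)
    have hdm : ∀ j, d j (m j) = 1 := by
      intro j
      obtain ⟨m', o', h1, h3⟩ := (hML m l).1 hml j
      simp only [hd]
      exact if_pos ⟨m', o', h1, h3⟩
    have he_pos : ∀ j, 0 < e j := by
      intro j
      simp only [he]
      apply Finset.sum_pos' (fun a _ => by simp only [hd]; split <;> norm_num)
      refine ⟨m j, Finset.mem_univ _, ?_⟩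
      have : d j (m j) = 1 := hdm j
      rw [this]
      norm_num
    have hc_ne : (1/(Lr*Nr)) ≠ 0 := one_div_ne_zero (ne_of_gt (mul_pos hLrpos hNrpos))
    have hLHS : q m o l / (∑ ob, q m ob l) = ∏ j, G j (m j) (o j) := by
      rw [hqrep m o, hsum_ob m]
      have h1 : ∏ j, d j (m j) = 1 := Finset.prod_eq_one fun j _ => hdm j
      rw [h1, one_mul, mul_div_assoc, div_self hc_ne, mul_one]
    have hfactor : ∀ i,
        ((∑ m' : ∀ j, M j, if m' i = m i then
              (∑ ob, if ob i = o i then q m' ob l else 0) else 0) /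
         (∑ m' : ∀ j, M j, if m' i = m i then (∑ ob, q m' ob l) else 0))
          = G i (m i) (o i) := by
      intro i
      have hden : (∑ m' : ∀ j, M j, if m' i = m i then (∑ ob, q m' ob l) else 0)
          = ((d i (m i)) * ∏ j ∈ Finset.univ.erase i, e j) * (1/(Lr*Nr)) := by
        have step : ∀ m' : ∀ j, M j, (if m' i = m i then (∑ ob, q m' ob l) else 0)
            = (if m' i = m i then ∏ j, d j (m' j) else 0) * (1/(Lr*Nr)) := by
          intro m'
          rw [hsum_ob m', ite_mul_zero17]
        rw [Finset.sum_congr rfl fun m' _ => step m', ← Finset.sum_mul]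
        congr 1
        refine (sum_pi_prod_pin17 d i (m i)).trans ?_
        rfl
      have hinner : ∀ m' : ∀ j, M j,
          (∑ ob, if ob i = o i then q m' ob l else 0)
            = (G i (m' i) (o i) * ∏ j ∈ Finset.univ.erase i, d j (m' j)) * (1/(Lr*Nr)) := by
        intro m'
        have step : ∀ ob : ∀ j, O j, (if ob i = o i then q m' ob l else 0)
            = (if ob i = o i then ∏ j, G j (m' j) (ob j) else 0) * (1/(Lr*Nr)) := by
          intro ob
          rw [hqrep m' ob, ite_mul_zero17]
        rw [Finset.sum_congr rfl fun ob _ => step ob, ← Finset.sum_mul]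
        congr 1
        refine (sum_pi_prod_pin17 (fun j b => G j (m' j) b) i (o i)).trans ?_
        congr 1
        exact Finset.prod_congr rfl fun j _ => hGsum j (m' j)
      have hnum : (∑ m' : ∀ j, M j, if m' i = m i then
            (∑ ob, if ob i = o i then q m' ob l else 0) else 0)
          = ((G i (m i) (o i)) * ∏ j ∈ Finset.univ.erase i, e j) * (1/(Lr*Nr)) := by
        have step2 : ∀ m' : ∀ j, M j,
            (if m' i = m i then (∑ ob, if ob i = o i then q m' ob l else 0) else 0)
              = (if m' i = m i then
                  G i (m' i) (o i) * ∏ j ∈ Finset.univ.erase i, d j (m' j) else 0)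
                * (1/(Lr*Nr)) := by
          intro m'
          rw [hinner m', ite_mul_zero17]
        rw [Finset.sum_congr rfl fun m' _ => step2 m', ← Finset.sum_mul]
        congr 1
        refine (sum_pi_prod_pin2_17 d i (fun a => G i a (o i)) (m i)).trans ?_
        rfl
      rw [hnum, hden, hdm i]
      exact arith_e17 _ _ _ (ne_of_gt (Finset.prod_pos fun j _ => he_pos j)) hc_ne
    rw [hLHS, Finset.prod_congr rfl fun i _ => hfactor i]
  exact ⟨G1, G2, G3, G4, G5⟩
end

section
/- Let e be a total relational empirical model (for every m̄ ∈ M there exists ō with e(m̄,ō)). Then e is realized by some relational hidden-variable model satisfying λ-Independence and Locality if and only if e is a union of total strongly deterministic models, i.e. there exists a family of functions (f_λ)_{λ∈Λ}, where each f_λ = ∏_{i=1}^n f_{λ,i} with f_{λ,i} : M_i → O_i, such that e(m̄,ō) holds if and only if there exists λ with f_λ(m̄) = ō and the graph of each f_λ is contained in e. -/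
/-- A total relational empirical model is realized by some hidden-variable
model satisfying λ-Independence and Locality iff it is a union of total
strongly deterministic models. -/
theorem stmt_18 {n : ℕ} (hn : 1 ≤ n) (M O : Fin n → Type)
    (e : (∀ i, M i) → (∀ i, O i) → Prop)
    -- e is total
    (htot : ∀ m : ∀ i, M i, ∃ o : ∀ i, O i, e m o) :
    -- e is realized by a hidden-variable model satisfying λI and L
    (∃ (Λ : Type) (h : (∀ i, M i) → (∀ i, O i) → Λ → Prop),
      -- λ-Independence
      (∀ (m m' : ∀ j, M j) (l : Λ),
          (∃ (ob : ∀ j, O j) (l' : Λ), h m' ob l') →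
          (∃ ob : ∀ j, O j, h m ob l) →
          ∃ ob : ∀ j, O j, h m' ob l) ∧
      -- Locality
      (∀ (m : ∀ j, M j) (o : ∀ j, O j) (l : Λ),
          (∃ ob : ∀ j, O j, h m ob l) →
          (∀ i : Fin n, ∃ (m' : ∀ j, M j) (o' : ∀ j, O j),
              m' i = m i ∧ o' i = o i ∧ h m' o' l) →
          h m o l) ∧
      -- h realizes e
      (∀ (m : ∀ j, M j) (o : ∀ j, O j), e m o ↔ ∃ l : Λ, h m o l))
    ↔
    -- e is a union of total strongly deterministic models
    (∃ (Λ : Type) (f : Λ → ∀ i, M i → O i),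
      (∀ (m : ∀ i, M i) (o : ∀ i, O i),
          e m o ↔ ∃ l : Λ, (fun i => f l i (m i)) = o) ∧
      -- the graph of each f_λ is contained in e
      (∀ (l : Λ) (m : ∀ i, M i), e m (fun i => f l i (m i)))) := by

  constructor
  · rintro ⟨Λ, h, hLI, hLoc, hreal⟩
    by_cases hne : Nonempty (∀ i, M i)
    · classical
      have claimA : ∀ l, (∃ m o, h m o l) → ∀ m, ∃ o, h m o l := by
        rintro l ⟨m₀, o₀, hm₀⟩ m
        obtain ⟨o', he'⟩ := htot m
        obtain ⟨l', hl'⟩ := (hreal m o').mp he'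
        exact hLI m₀ m l ⟨o', l', hl'⟩ ⟨o₀, hm₀⟩
      have claimB : ∀ l, (∃ m o, h m o l) → ∀ (i : Fin n) (mi : M i),
          ∃ oi : O i, ∃ m' o', m' i = mi ∧ o' i = oi ∧ h m' o' l := by
        intro l hl i mi
        obtain ⟨o, ho⟩ :=
          claimA l hl (Function.update (Classical.arbitrary (∀ j, M j)) i mi)
        exact ⟨o i, _, o, by simp, rfl, ho⟩
      have key : ∀ l (g : ∀ i, M i → O i), (∃ m o, h m o l) →
          (∀ (i : Fin n) (mi : M i), ∃ m' o', m' i = mi ∧ o' i = g i mi ∧ h m' o' l) →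
          ∀ m, h m (fun i => g i (m i)) l := by
        intro l g hl hg m
        exact hLoc m (fun i => g i (m i)) l (claimA l hl m) (fun i => hg i (m i))
      refine ⟨{p : Λ × (∀ i, M i → O i) // (∃ m o, h m o p.1) ∧
          ∀ (i : Fin n) (mi : M i), ∃ m' o', m' i = mi ∧ o' i = p.2 i mi ∧ h m' o' p.1},
        fun p => p.1.2, ?_, ?_⟩
      · intro m o
        constructor
        · intro hemo
          obtain ⟨l, hl⟩ := (hreal m o).mp hemo
          have hsupp : ∃ m o, h m o l := ⟨m, o, hl⟩
          set g : ∀ i, M i → O i := fun i mi =>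
            if hmi : mi = m i then o i else Classical.choose (claimB l hsupp i mi)
            with hgdef
          have hg : ∀ (i : Fin n) (mi : M i),
              ∃ m' o', m' i = mi ∧ o' i = g i mi ∧ h m' o' l := by
            intro i mi
            by_cases hmi : mi = m i
            · subst hmi
              exact ⟨m, o, rfl, by simp [hgdef], hl⟩
            · have hspec := Classical.choose_spec (claimB l hsupp i mi)
              simpa [hgdef, hmi] using hspec
          refine ⟨⟨(l, g), hsupp, hg⟩, ?_⟩
          funext i
          simp [hgdef]
        · rintro ⟨⟨⟨l, g⟩, hsupp, hg⟩, rfl⟩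
          exact (hreal _ _).mpr ⟨l, key l g hsupp hg _⟩
      · rintro ⟨⟨l, g⟩, hsupp, hg⟩ m
        exact (hreal _ _).mpr ⟨l, key l g hsupp hg m⟩
    · refine ⟨PEmpty, fun l => l.elim, ?_, ?_⟩
      · intro m o
        exact absurd ⟨m⟩ hne
      · intro l m
        exact absurd ⟨m⟩ hne
  · rintro ⟨Λ, f, hef, hgraph⟩
    refine ⟨Λ, fun m o l => (fun i => f l i (m i)) = o, ?_, ?_, ?_⟩
    · intro m m' l _ _
      exact ⟨_, rfl⟩
    · intro m o l _ hcomp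
      funext i
      obtain ⟨m', o', hm', ho', hh⟩ := hcomp i
      calc f l i (m i) = f l i (m' i) := by rw [hm']
        _ = o' i := by rw [← hh]
        _ = o i := ho'
    · exact hef
end
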